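/- arXiv:1705.05905 — 4 statements merged into one kernel-verified Lean document; each statement's English description precedes it below -/
import Mathlib

section
/- Let p : [0,∞) → ℝ be continuous on [0,∞), continuously differentiable on (0,∞), with p(0) = 0, p'(ρ) > 0 for all ρ > 0, lim_{ρ→∞} p'(ρ)/ρ^{γ−1} = a₀ for some constants a₀ > 0 and γ > 3/2, and with s ↦ p(s)/s² integrable on (0,1). Then for any constants 0 < a < b < ∞ there exists a constant C = C(a,b) > 0 such that for every ρ ∈ [0,∞) and every r ∈ [a,b] the following holds: if a/2 ≤ ρ ≤ 2b then E(ρ,r) ≥ C (ρ − r)², while if ρ < a/2 or ρ > 2b then E(ρ,r) ≥ C (1 + ρ^γ). -/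
open MeasureTheory Filter Set
open intervalIntegral

lemma int_inv_sq {c d : ℝ} (hc : 0 < c) (hd : 0 < d) :
    ∫ s in c..d, 1 / s ^ 2 = 1 / c - 1 / d := by
  have h : ∀ s ∈ uIcc c d, HasDerivAt (fun x : ℝ => -(1/x)) (1 / s ^ 2) s := by
    intro s hs
    have hs0 : s ≠ 0 := by
      have := (lt_min hc hd).trans_le hs.1
      positivity
    simpa [one_div, Pi.neg_def] using (hasDerivAt_inv hs0).neg
  have hint : IntervalIntegrable (fun s : ℝ => 1 / s ^ 2) volume c d := by
    apply ContinuousOn.intervalIntegrable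
    intro s hs
    have hs0 : s ≠ 0 := by
      have := (lt_min hc hd).trans_le hs.1
      positivity
    exact (continuousAt_const.div (continuousAt_pow _ _) (by positivity)).continuousWithinAt
  have := integral_eq_sub_of_hasDerivAt h hint
  rw [this]; ring

lemma int_sub_const (c d e : ℝ) :
    ∫ s in c..d, (s - e) = ((d - e) ^ 2 - (c - e) ^ 2) / 2 := by
  have h : ∀ s ∈ uIcc c d, HasDerivAt (fun x : ℝ => (x - e) ^ 2 / 2) (s - e) s := by
    intro s _
    have := (((hasDerivAt_id s).sub_const e).pow 2).div_const 2
    simpa using this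
  have hint : IntervalIntegrable (fun s : ℝ => s - e) volume c d :=
    (continuous_id.sub continuous_const).intervalIntegrable _ _
  rw [integral_eq_sub_of_hasDerivAt h hint]; ring

/-- The pressure potential `H(ρ) = ρ ∫₀^ρ p(s)/s² ds`. -/
noncomputable def Hpot (p : ℝ → ℝ) (ρ : ℝ) : ℝ := ρ * ∫ s in (0:ℝ)..ρ, p s / s ^ 2

/-- The relative energy `E(ρ,r) = H(ρ) − H'(r)(ρ−r) − H(r)`. -/
noncomputable def Erel (p : ℝ → ℝ) (ρ r : ℝ) : ℝ :=
  Hpot p ρ - deriv (Hpot p) r * (ρ - r) - Hpot p r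

set_option maxHeartbeats 4000000 in
/-- Coercivity of the relative energy on essential and residual sets. -/
theorem stmt_0 (γ a₀ : ℝ) (p p' : ℝ → ℝ)
    (hγ : 3 / 2 < γ) (ha₀ : 0 < a₀)
    (hp_cont : ContinuousOn p (Ici 0))
    (hp0 : p 0 = 0)
    (hp_deriv : ∀ x : ℝ, 0 < x → HasDerivAt p (p' x) x)
    (hp'_cont : ContinuousOn p' (Ioi 0))
    (hp'_pos : ∀ x : ℝ, 0 < x → 0 < p' x)
    (hp_lim : Tendsto (fun ρ : ℝ => p' ρ / ρ ^ (γ - 1)) atTop (nhds a₀))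
    (hp_int : IntegrableOn (fun s : ℝ => p s / s ^ 2) (Ioo 0 1)) :
    ∀ a b : ℝ, 0 < a → a < b →
      ∃ C : ℝ, 0 < C ∧ ∀ ρ r : ℝ, 0 ≤ ρ → r ∈ Icc a b →
        ((a / 2 ≤ ρ ∧ ρ ≤ 2 * b → C * (ρ - r) ^ 2 ≤ Erel p ρ r) ∧
         ((ρ < a / 2 ∨ 2 * b < ρ) → C * (1 + ρ ^ γ) ≤ Erel p ρ r)) := by
  have hγ1 : 1 < γ := by linarith
  have hγ0 : 0 < γ := by linarith
  -- ### generic setup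
  have hg_cont : ContinuousOn (fun s : ℝ => p s / s ^ 2) (Ioi 0) := by
    apply ContinuousOn.div₀ (hp_cont.mono (t := Ioi 0) (fun x hx => le_of_lt hx))
      (continuous_pow 2).continuousOn
    intro x hx
    have : (0:ℝ) < x := hx
    positivity
  have hmono : StrictMonoOn p (Ici 0) := by
    apply strictMonoOn_of_deriv_pos (convex_Ici 0) hp_cont
    intro x hx
    rw [interior_Ici] at hx
    rw [(hp_deriv x hx).deriv]
    exact hp'_pos x hx
  have hp_nonneg : ∀ x : ℝ, 0 ≤ x → 0 ≤ p x := by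
    intro x hx
    rcases eq_or_lt_of_le hx with h | h
    · rw [← h, hp0]
    · rw [← hp0]; exact (hmono (mem_Ici.mpr (le_refl 0)) (mem_Ici.mpr (le_of_lt h)) h).le
  have hp_le : ∀ x y : ℝ, 0 ≤ x → x ≤ y → p x ≤ p y := fun x y hx hxy =>
    hmono.monotoneOn hx (hx.trans hxy) hxy
  have hp_lt : ∀ x y : ℝ, 0 ≤ x → x < y → p x < p y := fun x y hx hxy =>
    hmono hx (hx.trans hxy.le) hxy
  have hg_int0 : ∀ x : ℝ, 0 ≤ x →
      IntervalIntegrable (fun s : ℝ => p s / s ^ 2) volume 0 x := by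
    intro x hx
    rw [intervalIntegrable_iff, uIoc_of_le hx]
    have h1 : IntegrableOn (fun s : ℝ => p s / s ^ 2) (Ioo 0 1 ∪ Icc (1/2) (max 1 x)) volume :=
      hp_int.union ((hg_cont.mono (fun t ht =>
        lt_of_lt_of_le (by norm_num) ht.1)).integrableOn_compact isCompact_Icc)
    refine h1.mono_set (fun t ht => ?_)
    rcases lt_or_ge t 1 with h2 | h2
    · exact Or.inl ⟨ht.1, h2⟩
    · exact Or.inr ⟨by linarith, le_max_of_le_right ht.2⟩
  have hg_int : ∀ c d : ℝ, 0 < c → 0 < d →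
      IntervalIntegrable (fun s : ℝ => p s / s ^ 2) volume c d := by
    intro c d hc hd
    exact (hg_cont.mono (fun t ht => lt_of_lt_of_le (lt_min hc hd) ht.1)).intervalIntegrable
  have hgr_cont : ∀ r : ℝ, ContinuousOn (fun s : ℝ => (p s - p r) / s ^ 2) (Ioi 0) := by
    intro r
    apply ContinuousOn.div₀ ((hp_cont.mono (t := Ioi 0) (fun x hx => le_of_lt hx)).sub continuousOn_const)
      (continuous_pow 2).continuousOn
    intro x hx
    have : (0:ℝ) < x := hx
    positivity
  have hgr_int : ∀ r c d : ℝ, 0 < c → 0 < d →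
      IntervalIntegrable (fun s : ℝ => (p s - p r) / s ^ 2) volume c d := by
    intro r c d hc hd
    exact ((hgr_cont r).mono (fun t ht => lt_of_lt_of_le (lt_min hc hd) ht.1)).intervalIntegrable
  have hp'_int : ∀ c d : ℝ, 0 < c → 0 < d → IntervalIntegrable p' volume c d := by
    intro c d hc hd
    exact (hp'_cont.mono (fun t ht => lt_of_lt_of_le (lt_min hc hd) ht.1)).intervalIntegrable
  have hF : ∀ r : ℝ, 0 < r →
      HasDerivAt (fun x : ℝ => ∫ s in (0:ℝ)..x, p s / s ^ 2) (p r / r ^ 2) r := by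
    intro r hr
    exact integral_hasDerivAt_right (hg_int0 r hr.le)
      (hg_cont.stronglyMeasurableAtFilter isOpen_Ioi r hr)
      (hg_cont.continuousAt (Ioi_mem_nhds hr))
  have hH : ∀ r : ℝ, 0 < r →
      HasDerivAt (Hpot p) ((∫ s in (0:ℝ)..r, p s / s ^ 2) + p r / r) r := by
    intro r hr
    have h1 : HasDerivAt (fun x : ℝ => x * ∫ s in (0:ℝ)..x, p s / s ^ 2)
        (1 * (∫ s in (0:ℝ)..r, p s / s ^ 2) + r * (p r / r ^ 2)) r :=
      (hasDerivAt_id r).mul (hF r hr)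
    have h2 : Hpot p = fun x : ℝ => x * ∫ s in (0:ℝ)..x, p s / s ^ 2 := rfl
    rw [h2]
    convert h1 using 1
    field_simp
  -- key formula 1
  have hE : ∀ ρ r : ℝ, 0 ≤ ρ → 0 < r →
      Erel p ρ r = ρ * (∫ s in r..ρ, p s / s ^ 2) - p r * (ρ - r) / r := by
    intro ρ r hρ hr
    have hsub : (∫ s in r..ρ, p s / s ^ 2) =
        (∫ s in (0:ℝ)..ρ, p s / s ^ 2) - ∫ s in (0:ℝ)..r, p s / s ^ 2 :=
      (integral_interval_sub_left (hg_int0 ρ hρ) (hg_int0 r hr.le)).symm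
    rw [show Erel p ρ r = ρ * (∫ s in (0:ℝ)..ρ, p s / s ^ 2)
        - ((∫ s in (0:ℝ)..r, p s / s ^ 2) + p r / r) * (ρ - r)
        - r * ∫ s in (0:ℝ)..r, p s / s ^ 2 by
      rw [Erel, (hH r hr).deriv]; rfl, hsub]
    field_simp
    ring
  -- key formula 2
  have hE2 : ∀ ρ r : ℝ, 0 < ρ → 0 < r →
      Erel p ρ r = ρ * ∫ s in r..ρ, (p s - p r) / s ^ 2 := by
    intro ρ r hρ hr
    have hsplit : ∀ s : ℝ, (p s - p r) / s ^ 2 = p s / s ^ 2 - p r * (1 / s ^ 2) := by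
      intro s; ring
    have hint2 : IntervalIntegrable (fun s : ℝ => p r * (1 / s ^ 2)) volume r ρ := by
      apply ContinuousOn.intervalIntegrable
      intro s hs
      have hs0 : s ≠ 0 := by
        have := (lt_min hr hρ).trans_le hs.1
        positivity
      exact (continuousAt_const.mul (continuousAt_const.div
        (continuousAt_pow _ _) (by positivity))).continuousWithinAt
    have : (∫ s in r..ρ, (p s - p r) / s ^ 2)
        = (∫ s in r..ρ, p s / s ^ 2) - ∫ s in r..ρ, p r * (1 / s ^ 2) := by
      rw [← integral_sub (hg_int r ρ hr hρ) hint2]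
      simp only [hsplit]
    rw [hE ρ r hρ.le hr, this, intervalIntegral.integral_const_mul, int_inv_sq hr hρ]
    field_simp
  -- ### now fix a, b
  intro a b ha hab
  have hb : 0 < b := ha.trans hab
  -- FTC for p
  have hftc : ∀ c d : ℝ, 0 < c → 0 < d → p d - p c = ∫ s in c..d, p' s := by
    intro c d hc hd
    refine (integral_eq_sub_of_hasDerivAt (fun s hs => hp_deriv s ?_) (hp'_int c d hc hd)).symm
    exact (lt_min hc hd).trans_le hs.1
  -- minimum of p' on [a/2, 2b]
  obtain ⟨x₀, hx₀mem, hx₀min⟩ := isCompact_Icc.exists_isMinOn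
    (⟨a, by constructor <;> linarith⟩ : (Icc (a/2) (2*b)).Nonempty)
    (hp'_cont.mono (fun t ht => lt_of_lt_of_le (by linarith) ht.1))
  obtain ⟨m, hm_def⟩ : ∃ x : ℝ, x = p' x₀ := ⟨_, rfl⟩
  have hm : 0 < m := hm_def ▸ hp'_pos x₀ (by linarith [hx₀mem.1])
  -- linear lower bound for p on [a/2, 2b]
  have hlin : ∀ u v : ℝ, a/2 ≤ u → u ≤ v → v ≤ 2*b → m * (v - u) ≤ p v - p u := by
    intro u v hu huv hv
    have hu0 : 0 < u := by linarith
    have hv0 : 0 < v := by linarith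
    rw [hftc u v hu0 hv0]
    have h1 : ∫ s in u..v, m ≤ ∫ s in u..v, p' s := by
      apply integral_mono_on huv intervalIntegrable_const (hp'_int u v hu0 hv0)
      intro s hs
      exact hm_def ▸ hx₀min ⟨by linarith [hs.1], by linarith [hs.2]⟩
    simpa [mul_comm] using h1
  have hδ₂ : 0 < p a - p (3*a/4) := by
    have := hp_lt (3*a/4) a (by linarith) (by linarith); linarith
  have hδ₃ : 0 < p (3*b/2) - p b := by
    have := hp_lt b (3*b/2) hb.le (by linarith); linarith
  have hpb : 0 < p b := by rw [← hp0]; exact hp_lt 0 b le_rfl hb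
  have hpa : 0 < p a := by rw [← hp0]; exact hp_lt 0 a le_rfl ha
  -- growth at infinity
  obtain ⟨M₀, hM₀⟩ := eventually_atTop.mp
    (hp_lim.eventually (eventually_ge_nhds (by linarith : a₀/2 < a₀)))
  obtain ⟨M, hM_def⟩ : ∃ x : ℝ, x = max M₀ 1 := ⟨_, rfl⟩
  have hM1 : (1:ℝ) ≤ M := hM_def ▸ le_max_right _ _
  have hM0 : (0:ℝ) < M := by linarith
  have hp'_low : ∀ s : ℝ, M ≤ s → a₀/2 * s ^ (γ-1) ≤ p' s := by
    intro s hs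
    have h1 : a₀/2 ≤ p' s / s ^ (γ-1) := hM₀ s (le_trans (hM_def ▸ le_max_left M₀ 1) hs)
    have h2 : (0:ℝ) < s ^ (γ-1) := Real.rpow_pos_of_pos (by linarith) _
    exact (le_div_iff₀ h2).mp h1
  have hpM : ∀ s : ℝ, 2*M ≤ s → a₀/(4*γ) * s ^ γ ≤ p s := by
    intro s hs
    have hsM : M ≤ s := by linarith
    have hs0 : (0:ℝ) < s := by linarith
    have h1 : p s - p M = ∫ t in M..s, p' t := hftc M s hM0 hs0
    have h2 : (∫ t in M..s, a₀/2 * t ^ (γ-1)) ≤ ∫ t in M..s, p' t := by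
      apply integral_mono_on hsM
        ((intervalIntegral.intervalIntegrable_rpow' (by linarith)).const_mul _)
        (hp'_int M s hM0 hs0)
      intro t ht
      exact hp'_low t ht.1
    have h3 : (∫ t in M..s, a₀/2 * t ^ (γ-1)) = a₀/2 * ((s ^ γ - M ^ γ)/γ) := by
      rw [intervalIntegral.integral_const_mul, integral_rpow (Or.inl (by linarith : (-1:ℝ) < γ - 1))]
      rw [show γ - 1 + 1 = γ by ring]
    have h4 : M ^ γ ≤ s ^ γ / 2 := by
      have h5 : M ^ γ ≤ (s/2) ^ γ := Real.rpow_le_rpow hM0.le (by linarith) hγ0.le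
      have h6 : ((s/2:ℝ)) ^ γ = s ^ γ / 2 ^ γ := Real.div_rpow hs0.le (by norm_num) γ
      have h7 : (2:ℝ) ≤ 2 ^ γ := by
        calc (2:ℝ) = 2 ^ (1:ℝ) := by rw [Real.rpow_one]
        _ ≤ 2 ^ γ := Real.rpow_le_rpow_of_exponent_le one_le_two hγ1.le
      have h8 : (0:ℝ) ≤ s ^ γ := (Real.rpow_pos_of_pos hs0 γ).le
      calc M ^ γ ≤ s ^ γ / 2 ^ γ := h6 ▸ h5
      _ ≤ s ^ γ / 2 := by
        apply div_le_div_of_nonneg_left h8 (by norm_num) h7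
    have h9 : 0 ≤ p M := hp_nonneg M hM0.le
    have h10 : a₀/2 * ((s ^ γ - M ^ γ)/γ) ≤ p s - p M := by linarith [h1 ▸ h2, h2.trans_eq h1.symm]
    have h11 : a₀/(4*γ) * s ^ γ ≤ a₀/2 * ((s ^ γ - M ^ γ)/γ) := by
      have h12 : s ^ γ ≤ 2*(s ^ γ - M ^ γ) := by linarith
      have h13 : a₀/(4*γ) * s ^ γ ≤ a₀/(4*γ) * (2*(s ^ γ - M ^ γ)) :=
        mul_le_mul_of_nonneg_left h12 (by positivity)
      refine h13.trans_eq ?_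
      field_simp
      ring
    linarith
  -- the threshold K
  obtain ⟨Y, hY_def⟩ : ∃ x : ℝ, x = 8*γ*(p b)/a₀ + 1 := ⟨_, rfl⟩
  have hY1 : (1:ℝ) ≤ Y := by
    rw [hY_def]
    have : 0 ≤ 8*γ*(p b)/a₀ := by positivity
    linarith
  have hY0 : (0:ℝ) < Y := by linarith
  obtain ⟨K, hK_def⟩ : ∃ x : ℝ, x = max (max (2*M) b) (Y ^ (1/γ)) := ⟨_, rfl⟩
  have hKY : Y ≤ K ^ γ := by
    have h1 : Y ^ (1/γ) ≤ K := hK_def ▸ le_max_right _ _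
    have h2 : (Y ^ (1/γ)) ^ γ ≤ K ^ γ :=
      Real.rpow_le_rpow (Real.rpow_nonneg hY0.le _) h1 hγ0.le
    have h3 : (Y ^ (1/γ)) ^ γ = Y := by
      rw [← Real.rpow_mul hY0.le, one_div_mul_cancel hγ0.ne', Real.rpow_one]
    linarith [h3 ▸ h2]
  have hKb : b ≤ K := hK_def ▸ le_trans (le_max_right (2*M) b) (le_max_left _ _)
  have hK2M : 2*M ≤ K := hK_def ▸ le_trans (le_max_left (2*M) b) (le_max_left _ _)
  have hK1 : (1:ℝ) ≤ K := by
    rw [hK_def]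
    refine le_trans ?_ (le_max_right _ _)
    exact Real.one_le_rpow hY1 (by positivity)
  have hK0 : (0:ℝ) < K := by linarith
  have hKg0 : (0:ℝ) < K ^ γ := Real.rpow_pos_of_pos hK0 γ
  -- for s ≥ K, p s - p r dominates
  have hκ : ∀ s : ℝ, K ≤ s → ∀ r : ℝ, r ∈ Icc a b → a₀/(8*γ) * s ^ γ ≤ p s - p r := by
    intro s hs r hrIcc
    have hs0 : (0:ℝ) < s := by linarith
    have h1 : a₀/(4*γ) * s ^ γ ≤ p s := hpM s (by linarith)
    have h2 : p r ≤ p b := hp_le r b (by linarith [hrIcc.1]) hrIcc.2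
    have h3 : K ^ γ ≤ s ^ γ := Real.rpow_le_rpow hK0.le hs hγ0.le
    have h4 : p b ≤ a₀/(8*γ) * s ^ γ := by
      have h5 : 8*γ*(p b)/a₀ ≤ s ^ γ := by
        have h := hKY
        rw [hY_def] at h
        linarith [h3]
      have h6 : a₀/(8*γ)*(8*γ*(p b)/a₀) ≤ a₀/(8*γ) * s ^ γ :=
        mul_le_mul_of_nonneg_left h5 (by positivity)
      refine le_trans (le_of_eq ?_) h6
      field_simp
    have h7 : a₀/(4*γ)*s ^ γ = a₀/(8*γ)*s ^ γ + a₀/(8*γ)*s ^ γ := by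
      field_simp
      ring
    linarith
  -- the constants
  have h2γ : (2:ℝ) ^ (1-γ) < 1 :=
    Real.rpow_lt_one_of_one_lt_of_neg one_lt_two (by linarith)
  have h2γ0 : (0:ℝ) < 2 ^ (1-γ) := Real.rpow_pos_of_pos (by norm_num) _
  have hD2 : (0:ℝ) < 1 + (a/2) ^ γ := by positivity
  have hD3 : (0:ℝ) < 1 + (2*K) ^ γ := by positivity
  obtain ⟨c1, hc1_def⟩ : ∃ x : ℝ, x = a*m/(16*b^2) := ⟨_, rfl⟩
  obtain ⟨c2, hc2_def⟩ : ∃ x : ℝ, x = min (p a) ((p a - p (3*a/4))/3) / (1 + (a/2) ^ γ) :=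
    ⟨_, rfl⟩
  obtain ⟨c3, hc3_def⟩ : ∃ x : ℝ, x = (p (3*b/2) - p b)/(3*(1 + (2*K) ^ γ)) := ⟨_, rfl⟩
  obtain ⟨c4, hc4_def⟩ : ∃ x : ℝ, x = a₀/(8*γ)*(1 - 2 ^ (1-γ))/(2*(γ-1)) := ⟨_, rfl⟩
  have hc1 : 0 < c1 := by rw [hc1_def]; positivity
  have hc2 : 0 < c2 := by
    rw [hc2_def]; exact div_pos (lt_min hpa (by linarith)) hD2
  have hc3 : 0 < c3 := by
    rw [hc3_def]; exact div_pos (by linarith) (by positivity)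
  have hc4 : 0 < c4 := by
    rw [hc4_def]; exact div_pos (mul_pos (by positivity) (by linarith)) (by linarith)
  obtain ⟨C, hC_def⟩ : ∃ x : ℝ, x = min (min c1 c2) (min c3 c4) := ⟨_, rfl⟩
  have hC0 : 0 < C := by
    rw [hC_def]; exact lt_min (lt_min hc1 hc2) (lt_min hc3 hc4)
  have hCc1 : C ≤ c1 := hC_def ▸ le_trans (min_le_left _ _) (min_le_left _ _)
  have hCc2 : C ≤ c2 := hC_def ▸ le_trans (min_le_left _ _) (min_le_right _ _)
  have hCc3 : C ≤ c3 := hC_def ▸ le_trans (min_le_right _ _) (min_le_left _ _)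
  have hCc4 : C ≤ c4 := hC_def ▸ le_trans (min_le_right _ _) (min_le_right _ _)
  refine ⟨C, hC0, ?_⟩
  intro ρ r hρ hrIcc
  have hra : a ≤ r := hrIcc.1
  have hrb : r ≤ b := hrIcc.2
  have hr0 : 0 < r := lt_of_lt_of_le ha hra
  have hrne : r ≠ 0 := hr0.ne'
  have hane : a ≠ 0 := ha.ne'
  have h8γ : (8*γ) ≠ 0 := by positivity
  have hγm1 : (γ-1) ≠ 0 := by
    have : (0:ℝ) < γ - 1 := by linarith
    exact this.ne'
  have hIrs : ∀ c d : ℝ, 0 < c → 0 < d →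
      IntervalIntegrable (fun s : ℝ => (p r - p s)/s^2) volume c d := by
    intro c d hc hd
    have h3 := (hgr_int r c d hc hd).neg
    have h4 : (-fun s : ℝ => (p s - p r)/s^2) = fun s : ℝ => (p r - p s)/s^2 := by
      funext s
      show -((p s - p r)/s^2) = (p r - p s)/s^2
      ring
    rwa [h4] at h3
  have hinv_int : ∀ c d : ℝ, 0 < c → 0 < d →
      IntervalIntegrable (fun s : ℝ => 1/s^2) volume c d := by
    intro c d hc hd
    apply ContinuousOn.intervalIntegrable
    intro s hs
    have hs0 : s ≠ 0 := by
      have := (lt_min hc hd).trans_le hs.1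
      positivity
    exact (continuousAt_const.div (continuousAt_pow _ _) (by positivity)).continuousWithinAt
  constructor
  · rintro ⟨h1, h2⟩
    have hρ0 : 0 < ρ := lt_of_lt_of_le (by linarith) h1
    rw [hE2 ρ r hρ0 hr0]
    rcases le_total r ρ with hle | hle
    · have key : ∀ s ∈ Icc r ρ, m*(s - r)/(2*b)^2 ≤ (p s - p r)/s^2 := by
        intro s hs
        have hs1 : 0 < s := lt_of_lt_of_le hr0 hs.1
        have hml : m*(s-r) ≤ p s - p r := hlin r s (by linarith) hs.1 (le_trans hs.2 h2)
        have hsb : s^2 ≤ (2*b)^2 := by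
          have h6 : s ≤ 2*b := le_trans hs.2 h2
          exact pow_le_pow_left₀ hs1.le h6 2
        rw [div_le_div_iff₀ (by positivity) (by positivity)]
        exact mul_le_mul hml hsb (by positivity)
          ((mul_nonneg hm.le (by linarith [hs.1])).trans hml)
      have hint1 : IntervalIntegrable (fun s : ℝ => m*(s - r)/(2*b)^2) volume r ρ :=
        ((continuous_const.mul (continuous_id.sub continuous_const)).div_const
          _).intervalIntegrable _ _
      have hmono2 : (∫ s in r..ρ, m*(s-r)/(2*b)^2) ≤ ∫ s in r..ρ, (p s - p r)/s^2 :=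
        integral_mono_on hle hint1 (hgr_int r r ρ hr0 hρ0) key
      have hcalc : (∫ s in r..ρ, m*(s-r)/(2*b)^2) = m/(2*b)^2 * ((ρ-r)^2/2) := by
        have he : (fun s : ℝ => m*(s-r)/(2*b)^2) = fun s : ℝ => (m/(2*b)^2) * (s - r) := by
          funext s; ring
        rw [he, intervalIntegral.integral_const_mul, int_sub_const]
        ring
      calc C*(ρ-r)^2 ≤ c1*(ρ-r)^2 := mul_le_mul_of_nonneg_right hCc1 (sq_nonneg _)
        _ = (a/2) * (m/(2*b)^2 * ((ρ-r)^2/2)) := by rw [hc1_def]; ring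
        _ ≤ ρ * (m/(2*b)^2 * ((ρ-r)^2/2)) := mul_le_mul_of_nonneg_right h1 (by positivity)
        _ ≤ ρ * ∫ s in r..ρ, (p s - p r)/s^2 :=
            mul_le_mul_of_nonneg_left (hcalc ▸ hmono2) hρ0.le
    · have hflip : (∫ s in r..ρ, (p s - p r)/s^2) = ∫ s in ρ..r, (p r - p s)/s^2 := by
        rw [integral_symm ρ r,
          show (fun s : ℝ => (p r - p s)/s^2) = fun s : ℝ => -((p s - p r)/s^2) by
            funext s; ring,
          intervalIntegral.integral_neg]
      rw [hflip]
      have key : ∀ s ∈ Icc ρ r, m*(r - s)/(2*b)^2 ≤ (p r - p s)/s^2 := by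
        intro s hs
        have hs1 : 0 < s := lt_of_lt_of_le hρ0 hs.1
        have hml : m*(r-s) ≤ p r - p s := hlin s r (by linarith [hs.1]) hs.2 (by linarith)
        have hsb : s^2 ≤ (2*b)^2 := by
          have h6 : s ≤ 2*b := by linarith [hs.2]
          exact pow_le_pow_left₀ hs1.le h6 2
        rw [div_le_div_iff₀ (by positivity) (by positivity)]
        exact mul_le_mul hml hsb (by positivity)
          ((mul_nonneg hm.le (by linarith [hs.2])).trans hml)
      have hint1 : IntervalIntegrable (fun s : ℝ => m*(r - s)/(2*b)^2) volume ρ r :=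
        ((continuous_const.mul (continuous_const.sub continuous_id)).div_const
          _).intervalIntegrable _ _
      have hint2 : IntervalIntegrable (fun s : ℝ => (p r - p s)/s^2) volume ρ r :=
        hIrs ρ r hρ0 hr0
      have hmono2 : (∫ s in ρ..r, m*(r-s)/(2*b)^2) ≤ ∫ s in ρ..r, (p r - p s)/s^2 :=
        integral_mono_on hle hint1 hint2 key
      have hcalc : (∫ s in ρ..r, m*(r-s)/(2*b)^2) = m/(2*b)^2 * ((ρ-r)^2/2) := by
        have he : (fun s : ℝ => m*(r-s)/(2*b)^2) = fun s : ℝ => (-(m/(2*b)^2)) * (s - r) := by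
          funext s; ring
        rw [he, intervalIntegral.integral_const_mul, int_sub_const]
        ring
      calc C*(ρ-r)^2 ≤ c1*(ρ-r)^2 := mul_le_mul_of_nonneg_right hCc1 (sq_nonneg _)
        _ = (a/2) * (m/(2*b)^2 * ((ρ-r)^2/2)) := by rw [hc1_def]; ring
        _ ≤ ρ * (m/(2*b)^2 * ((ρ-r)^2/2)) := mul_le_mul_of_nonneg_right h1 (by positivity)
        _ ≤ ρ * ∫ s in ρ..r, (p r - p s)/s^2 :=
            mul_le_mul_of_nonneg_left (hcalc ▸ hmono2) hρ0.le
  · intro hcase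
    rcases hcase with hlt | hgt
    · -- residual, small density: ρ < a/2
      rcases eq_or_lt_of_le hρ with heq | hρ0
      · -- ρ = 0
        rw [← heq]
        have hE0 : Erel p 0 r = p r := by
          rw [hE 0 r le_rfl hr0]
          field_simp
          ring
        rw [hE0, Real.zero_rpow hγ0.ne']
        have hc2pa : C ≤ p a := by
          refine hCc2.trans ?_
          rw [hc2_def]
          refine le_trans (div_le_self ?_ (by linarith [Real.rpow_nonneg (by linarith : (0:ℝ) ≤ a/2) γ])) (min_le_left _ _)
          exact le_min hpa.le (by linarith)
        calc C*(1+0) = C := by ring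
          _ ≤ p a := hc2pa
          _ ≤ p r := hp_le a r ha.le hra
      · -- 0 < ρ < a/2
        rw [hE2 ρ r hρ0 hr0]
        have hρne : ρ ≠ 0 := hρ0.ne'
        have hflip : (∫ s in r..ρ, (p s - p r)/s^2) = ∫ s in ρ..r, (p r - p s)/s^2 := by
          rw [integral_symm ρ r,
            show (fun s : ℝ => (p r - p s)/s^2) = fun s : ℝ => -((p s - p r)/s^2) by
              funext s; ring,
            intervalIntegral.integral_neg]
        rw [hflip]
        have h34 : (0:ℝ) < 3*a/4 := by linarith
        have hρ34 : ρ ≤ 3*a/4 := by linarith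
        have hsplit : (∫ s in ρ..r, (p r - p s)/s^2)
            = (∫ s in ρ..(3*a/4), (p r - p s)/s^2) + ∫ s in (3*a/4)..r, (p r - p s)/s^2 :=
          (integral_add_adjacent_intervals (hIrs ρ (3*a/4) hρ0 h34) (hIrs (3*a/4) r h34 hr0)).symm
        have hpos2 : 0 ≤ ∫ s in (3*a/4)..r, (p r - p s)/s^2 := by
          apply integral_nonneg (by linarith)
          intro u hu
          have hu0 : (0:ℝ) < u := lt_of_lt_of_le h34 hu.1
          have : p u ≤ p r := hp_le u r hu0.le hu.2
          exact div_nonneg (by linarith) (by positivity)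
        have hlow : ∀ s ∈ Icc ρ (3*a/4), (p a - p (3*a/4)) * (1/s^2) ≤ (p r - p s)/s^2 := by
          intro s hs
          have hs0 : 0 < s := lt_of_lt_of_le hρ0 hs.1
          have h3 : p s ≤ p (3*a/4) := hp_le s (3*a/4) hs0.le hs.2
          have h4 : p a ≤ p r := hp_le a r ha.le hra
          rw [mul_one_div]
          exact (div_le_div_iff_of_pos_right (by positivity)).mpr (by linarith)
        have hmono3 : (p a - p (3*a/4)) * (1/ρ - 1/(3*a/4)) ≤
            ∫ s in ρ..(3*a/4), (p r - p s)/s^2 := by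
          have h5 := integral_mono_on hρ34 ((hinv_int ρ (3*a/4) hρ0 h34).const_mul _)
            (hIrs ρ (3*a/4) hρ0 h34) hlow
          rwa [intervalIntegral.integral_const_mul, int_inv_sq hρ0 h34] at h5
        have hδval : ρ * ((p a - p (3*a/4)) * (1/ρ - 1/(3*a/4)))
            = (p a - p (3*a/4)) * (1 - 4*ρ/(3*a)) := by
          field_simp
        have hfrac : 4*ρ/(3*a) ≤ 2/3 := by
          rw [div_le_iff₀ (by positivity)]
          linarith
        have hrpow : ρ ^ γ ≤ (a/2) ^ γ := Real.rpow_le_rpow hρ hlt.le hγ0.le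
        calc C*(1+ρ^γ) ≤ c2*(1+ρ^γ) := mul_le_mul_of_nonneg_right hCc2 (by positivity)
          _ ≤ c2*(1+(a/2)^γ) := mul_le_mul_of_nonneg_left (by linarith) hc2.le
          _ ≤ (p a - p (3*a/4))/3 := by
              rw [hc2_def, div_mul_cancel₀ _ hD2.ne']
              exact min_le_right _ _
          _ ≤ (p a - p (3*a/4)) * (1 - 4*ρ/(3*a)) := by linarith [mul_le_mul_of_nonneg_left hfrac hδ₂.le]
          _ = ρ * ((p a - p (3*a/4)) * (1/ρ - 1/(3*a/4))) := hδval.symm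
          _ ≤ ρ * ((∫ s in ρ..(3*a/4), (p r - p s)/s^2) + ∫ s in (3*a/4)..r, (p r - p s)/s^2) := by
              apply mul_le_mul_of_nonneg_left _ hρ0.le
              linarith
          _ = ρ * ∫ s in ρ..r, (p r - p s)/s^2 := by rw [← hsplit]
    · -- residual, large density: 2b < ρ
      have hρ0 : 0 < ρ := by linarith
      rw [hE2 ρ r hρ0 hr0]
      rcases le_total ρ (2*K) with hle | hle
      · -- moderate: 2b < ρ ≤ 2K
        have h32 : (0:ℝ) < 3*b/2 := by linarith
        have h2b : (0:ℝ) < 2*b := by linarith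
        have hsplit : (∫ s in r..ρ, (p s - p r)/s^2)
            = (∫ s in r..(3*b/2), (p s - p r)/s^2) +
              ((∫ s in (3*b/2)..(2*b), (p s - p r)/s^2) + ∫ s in (2*b)..ρ, (p s - p r)/s^2) := by
          rw [integral_add_adjacent_intervals (hgr_int r (3*b/2) (2*b) h32 h2b)
            (hgr_int r (2*b) ρ h2b hρ0)]
          rw [integral_add_adjacent_intervals (hgr_int r r (3*b/2) hr0 h32)
            (hgr_int r (3*b/2) ρ h32 hρ0)]
        have hpos1 : 0 ≤ ∫ s in r..(3*b/2), (p s - p r)/s^2 := by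
          apply integral_nonneg (by linarith)
          intro u hu
          have hu0 : (0:ℝ) < u := lt_of_lt_of_le hr0 hu.1
          have : p r ≤ p u := hp_le r u hr0.le hu.1
          exact div_nonneg (by linarith) (by positivity)
        have hpos3 : 0 ≤ ∫ s in (2*b)..ρ, (p s - p r)/s^2 := by
          apply integral_nonneg (by linarith)
          intro u hu
          have hu0 : (0:ℝ) < u := lt_of_lt_of_le h2b hu.1
          have : p r ≤ p u := hp_le r u hr0.le (by linarith [hu.1])
          exact div_nonneg (by linarith) (by positivity)
        have hlow : ∀ s ∈ Icc (3*b/2) (2*b), (p (3*b/2) - p b) * (1/s^2) ≤ (p s - p r)/s^2 := by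
          intro s hs
          have hs0 : 0 < s := lt_of_lt_of_le h32 hs.1
          have h3 : p (3*b/2) ≤ p s := hp_le (3*b/2) s h32.le hs.1
          have h4 : p r ≤ p b := hp_le r b hr0.le hrb
          rw [mul_one_div]
          exact (div_le_div_iff_of_pos_right (by positivity)).mpr (by linarith)
        have hmono3 : (p (3*b/2) - p b) * (1/(3*b/2) - 1/(2*b)) ≤
            ∫ s in (3*b/2)..(2*b), (p s - p r)/s^2 := by
          have h5 := integral_mono_on (by linarith : 3*b/2 ≤ 2*b)
            ((hinv_int (3*b/2) (2*b) h32 h2b).const_mul _)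
            (hgr_int r (3*b/2) (2*b) h32 h2b) hlow
          rwa [intervalIntegral.integral_const_mul, int_inv_sq h32 h2b] at h5
        have hbne : b ≠ 0 := hb.ne'
        have hval : (2*b) * ((p (3*b/2) - p b) * (1/(3*b/2) - 1/(2*b))) = (p (3*b/2) - p b)/3 := by
          field_simp
          ring
        have hrpow : ρ ^ γ ≤ (2*K) ^ γ := Real.rpow_le_rpow hρ hle hγ0.le
        have hmid0 : 0 ≤ (p (3*b/2) - p b) * (1/(3*b/2) - 1/(2*b)) := by
          apply mul_nonneg (by linarith)
          rw [sub_nonneg]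
          apply one_div_le_one_div_of_le h32
          linarith
        calc C*(1+ρ^γ) ≤ c3*(1+ρ^γ) := mul_le_mul_of_nonneg_right hCc3 (by positivity)
          _ ≤ c3*(1+(2*K)^γ) := mul_le_mul_of_nonneg_left (by linarith) hc3.le
          _ = (p (3*b/2) - p b)/3 := by
              rw [hc3_def]
              field_simp
          _ = (2*b) * ((p (3*b/2) - p b) * (1/(3*b/2) - 1/(2*b))) := hval.symm
          _ ≤ ρ * ((p (3*b/2) - p b) * (1/(3*b/2) - 1/(2*b))) :=
              mul_le_mul_of_nonneg_right (by linarith) hmid0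
          _ ≤ ρ * ((∫ s in r..(3*b/2), (p s - p r)/s^2) +
              ((∫ s in (3*b/2)..(2*b), (p s - p r)/s^2) + ∫ s in (2*b)..ρ, (p s - p r)/s^2)) := by
              apply mul_le_mul_of_nonneg_left _ hρ0.le
              linarith
          _ = ρ * ∫ s in r..ρ, (p s - p r)/s^2 := by rw [← hsplit]
      · -- large: 2K ≤ ρ
        have hKρ : K ≤ ρ/2 := by linarith
        have hKle : K ≤ ρ := by linarith
        have hpos1 : 0 ≤ ∫ s in r..K, (p s - p r)/s^2 := by
          apply integral_nonneg (by linarith)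
          intro u hu
          have hu0 : (0:ℝ) < u := lt_of_lt_of_le hr0 hu.1
          have : p r ≤ p u := hp_le r u hr0.le hu.1
          exact div_nonneg (by linarith) (by positivity)
        have hlow : ∀ s ∈ Icc K ρ, (a₀/(8*γ)) * s^(γ-2) ≤ (p s - p r)/s^2 := by
          intro s hs
          have hs0 : (0:ℝ) < s := lt_of_lt_of_le hK0 hs.1
          have h3 : a₀/(8*γ) * s ^ γ ≤ p s - p r := hκ s hs.1 r hrIcc
          have h4 : (a₀/(8*γ) * s ^ γ)/s^2 ≤ (p s - p r)/s^2 :=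
            (div_le_div_iff_of_pos_right (by positivity)).mpr h3
          refine le_trans (le_of_eq ?_) h4
          rw [show (s^2 : ℝ) = s^(2:ℝ) by rw [← Real.rpow_natCast s 2]; norm_num,
            mul_div_assoc, ← Real.rpow_sub hs0]
        have hmono4 : (a₀/(8*γ)) * ((ρ^(γ-1) - K^(γ-1))/(γ-1)) ≤
            ∫ s in K..ρ, (p s - p r)/s^2 := by
          have h5 := integral_mono_on hKle
            ((intervalIntegral.intervalIntegrable_rpow' (by linarith)).const_mul _)
            (hgr_int r K ρ hK0 hρ0) hlow
          rwa [intervalIntegral.integral_const_mul, integral_rpow (Or.inl (by linarith : (-1:ℝ) < γ - 2)),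
            show γ - 2 + 1 = γ - 1 by ring] at h5
        have hKpow : K^(γ-1) ≤ ρ^(γ-1) * 2^(1-γ) := by
          have e0 : K^(γ-1) ≤ (ρ/2)^(γ-1) := Real.rpow_le_rpow hK0.le hKρ (by linarith)
          have e1 : ((ρ/2:ℝ))^(γ-1) = ρ^(γ-1)/2^(γ-1) := Real.div_rpow hρ0.le (by norm_num) _
          have e2 : ρ^(γ-1)/2^(γ-1) = ρ^(γ-1)*2^(1-γ) := by
            rw [show (1-γ) = -(γ-1) by ring, Real.rpow_neg (by norm_num)]
            ring
          linarith [e1 ▸ e0, e2 ▸ (e1 ▸ e0)]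
        have hρpow : ρ^γ = ρ * ρ^(γ-1) := by
          have h6 := Real.rpow_add hρ0 1 (γ-1)
          rw [show (1:ℝ)+(γ-1) = γ by ring, Real.rpow_one] at h6
          exact h6
        have hρg1 : (1:ℝ) ≤ ρ^γ := by
          calc (1:ℝ) = 1^γ := (Real.one_rpow γ).symm
          _ ≤ ρ^γ := Real.rpow_le_rpow zero_le_one (by linarith) hγ0.le
        have hstep1 : a₀/(8*γ) * ((ρ^(γ-1) - ρ^(γ-1)*2^(1-γ))/(γ-1)) ≤
            a₀/(8*γ) * ((ρ^(γ-1) - K^(γ-1))/(γ-1)) := by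
          apply mul_le_mul_of_nonneg_left _ (by positivity)
          exact (div_le_div_iff_of_pos_right (by linarith : (0:ℝ) < γ-1)).mpr (by linarith)
        calc C*(1+ρ^γ) ≤ c4*(1+ρ^γ) := mul_le_mul_of_nonneg_right hCc4 (by positivity)
          _ ≤ c4*(2*ρ^γ) := mul_le_mul_of_nonneg_left (by linarith) hc4.le
          _ = ρ * (a₀/(8*γ) * ((ρ^(γ-1) - ρ^(γ-1)*2^(1-γ))/(γ-1))) := by
              rw [hc4_def, hρpow]
              field_simp
          _ ≤ ρ * (a₀/(8*γ) * ((ρ^(γ-1) - K^(γ-1))/(γ-1))) :=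
              mul_le_mul_of_nonneg_left hstep1 hρ0.le
          _ ≤ ρ * ∫ s in K..ρ, (p s - p r)/s^2 := mul_le_mul_of_nonneg_left hmono4 hρ0.le
          _ ≤ ρ * ((∫ s in r..K, (p s - p r)/s^2) + ∫ s in K..ρ, (p s - p r)/s^2) := by
              apply mul_le_mul_of_nonneg_left _ hρ0.le
              linarith
          _ = ρ * ∫ s in r..ρ, (p s - p r)/s^2 := by
              rw [integral_add_adjacent_intervals (hgr_int r r K hr0 hK0)
                (hgr_int r K ρ hK0 hρ0)]
end

section
/- Let Ω ⊂ ℝ³ be a bounded measurable set, let 0 < a < b < ∞, and let p be as in the pressure hypotheses. There exists a constant C = C(a,b) > 0 such that for all measurable functions ρ : Ω → [0,∞), u, V : Ω → ℝ³, r : Ω → [a,b], and all measurable I, J : Ω × S² × (0,∞) → ℝ, the relative entropy functional ℰ := ∫_Ω [ (1/2) ρ |u − V|² + E(ρ,r) + (1/2) ∫₀^∞ ∫_{S²} (I − J)² dσ dν ] dx satisfies ℰ ≥ C ∫_Ω [ 1_{O_res} + ρ^γ 1_{O_res} + (ρ − r)² 1_{O_ess} + ρ |u − V|² + ∫₀^∞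 ∫_{S²} (I − J)² dσ dν ] dx, where O_ess = { x ∈ Ω : a/2 ≤ ρ(x) ≤ 2b } and O_res = Ω \ O_ess (both sides of the inequality may equal +∞). -/
open MeasureTheory Filter Set

/-- The surface measure on the unit sphere `S² ⊂ ℝ³` (total mass `4π`). -/
noncomputable def sphereMeasure : Measure (Metric.sphere (0 : EuclideanSpace ℝ (Fin 3)) 1) :=
  (volume : Measure (EuclideanSpace ℝ (Fin 3))).toSphere

set_option maxHeartbeats 1000000

lemma monoAux {f f' : ℝ → ℝ} {s : Set ℝ} (hs : Convex ℝ s)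
    (hd : ∀ t ∈ s, HasDerivAt f (f' t) t) (h0 : ∀ t ∈ interior s, 0 ≤ f' t) :
    MonotoneOn f s := by
  refine monotoneOn_of_deriv_nonneg hs (fun t ht => (hd t ht).continuousAt.continuousWithinAt)
    (fun t ht => ((hd t (interior_subset ht)).differentiableAt).differentiableWithinAt)
    (fun t ht => ?_)
  rw [(hd t (interior_subset ht)).deriv]; exact h0 t ht

lemma antiAux {f f' : ℝ → ℝ} {s : Set ℝ} (hs : Convex ℝ s)
    (hd : ∀ t ∈ s, HasDerivAt f (f' t) t) (h0 : ∀ t ∈ interior s, f' t ≤ 0) :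
    AntitoneOn f s := by
  refine antitoneOn_of_deriv_nonpos hs (fun t ht => (hd t ht).continuousAt.continuousWithinAt)
    (fun t ht => ((hd t (interior_subset ht)).differentiableAt).differentiableWithinAt)
    (fun t ht => ?_)
  rw [(hd t (interior_subset ht)).deriv]; exact h0 t ht

lemma fcont {p : ℝ → ℝ} (hp_cont : ContinuousOn p (Ici 0)) :
    ContinuousOn (fun s : ℝ => p s / s ^ 2) (Ioi 0) :=
  ContinuousOn.div (hp_cont.mono Ioi_subset_Ici_self)
    (continuousOn_pow 2) (fun s hs => pow_ne_zero _ (ne_of_gt hs))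

lemma Fint {p : ℝ → ℝ} (hp_cont : ContinuousOn p (Ici 0))
    (hp_int : IntegrableOn (fun s : ℝ => p s / s ^ 2) (Ioo 0 1)) (x : ℝ) (hx : 0 < x) :
    IntervalIntegrable (fun s : ℝ => p s / s ^ 2) volume 0 x := by
  rw [intervalIntegrable_iff_integrableOn_Ioc_of_le hx.le]
  have h2 : IntegrableOn (fun s : ℝ => p s / s ^ 2) (Icc 1 (max 1 x)) := by
    refine ContinuousOn.integrableOn_Icc ((fcont hp_cont).mono ?_)
    intro s hs; exact lt_of_lt_of_le one_pos hs.1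
  refine (hp_int.union h2).mono_set ?_
  intro s hs
  rcases lt_or_ge s 1 with h | h
  · exact Or.inl ⟨hs.1, h⟩
  · exact Or.inr ⟨h, hs.2.trans (le_max_right 1 x)⟩

lemma F_deriv {p : ℝ → ℝ} (hp_cont : ContinuousOn p (Ici 0))
    (hp_int : IntegrableOn (fun s : ℝ => p s / s ^ 2) (Ioo 0 1)) (r : ℝ) (hr : 0 < r) :
    HasDerivAt (fun y : ℝ => ∫ s in (0:ℝ)..y, p s / s ^ 2) (p r / r ^ 2) r := by
  refine intervalIntegral.integral_hasDerivAt_right (Fint hp_cont hp_int r hr)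
    ((fcont hp_cont).stronglyMeasurableAtFilter isOpen_Ioi r hr) ?_
  exact ((fcont hp_cont) r hr).continuousAt (Ioi_mem_nhds hr)

noncomputable def HpAux (p : ℝ → ℝ) (r : ℝ) : ℝ := (∫ s in (0:ℝ)..r, p s / s ^ 2) + p r / r

section derivs
variable {p p' : ℝ → ℝ}

lemma Hpot_deriv (hp_cont : ContinuousOn p (Ici 0))
    (hp_int : IntegrableOn (fun s : ℝ => p s / s ^ 2) (Ioo 0 1)) {r : ℝ} (hr : 0 < r) :
    HasDerivAt (Hpot p) (HpAux p r) r := by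
  have h := (hasDerivAt_id r).mul (F_deriv hp_cont hp_int r hr)
  have : Hpot p = fun y : ℝ => id y * ∫ s in (0:ℝ)..y, p s / s ^ 2 := rfl
  rw [this]
  refine h.congr_deriv ?_
  unfold HpAux id
  field_simp

lemma deriv_Hpot (hp_cont : ContinuousOn p (Ici 0))
    (hp_int : IntegrableOn (fun s : ℝ => p s / s ^ 2) (Ioo 0 1)) {r : ℝ} (hr : 0 < r) :
    deriv (Hpot p) r = HpAux p r := (Hpot_deriv hp_cont hp_int hr).deriv

lemma HpAux_deriv (hp_cont : ContinuousOn p (Ici 0))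
    (hp_deriv : ∀ x : ℝ, 0 < x → HasDerivAt p (p' x) x)
    (hp_int : IntegrableOn (fun s : ℝ => p s / s ^ 2) (Ioo 0 1)) {r : ℝ} (hr : 0 < r) :
    HasDerivAt (HpAux p) (p' r / r) r := by
  have h2 : HasDerivAt (fun y : ℝ => p y / y) ((p' r * r - p r * 1) / r ^ 2) r :=
    (hp_deriv r hr).div (hasDerivAt_id r) hr.ne'
  have h := (F_deriv hp_cont hp_int r hr).add h2
  refine h.congr_deriv ?_
  field_simp
  ring

lemma Erel_deriv (hp_cont : ContinuousOn p (Ici 0))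
    (hp_int : IntegrableOn (fun s : ℝ => p s / s ^ 2) (Ioo 0 1)) {r t : ℝ} (hr : 0 < r)
    (ht : 0 < t) :
    HasDerivAt (fun y : ℝ => Erel p y r) (HpAux p t - HpAux p r) t := by
  have h := ((Hpot_deriv hp_cont hp_int ht).sub
    (((hasDerivAt_id t).sub_const r).const_mul (deriv (Hpot p) r))).sub_const (Hpot p r)
  have he : (fun y : ℝ => Erel p y r)
      = fun y : ℝ => Hpot p y - deriv (Hpot p) r * (id y - r) - Hpot p r := rfl
  rw [he]
  refine h.congr_deriv ?_
  rw [deriv_Hpot hp_cont hp_int hr]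
  ring

lemma p_strictMono (hp_cont : ContinuousOn p (Ici 0))
    (hp_deriv : ∀ x : ℝ, 0 < x → HasDerivAt p (p' x) x)
    (hp'_pos : ∀ x : ℝ, 0 < x → 0 < p' x) : StrictMonoOn p (Ici 0) := by
  refine strictMonoOn_of_deriv_pos (convex_Ici 0) hp_cont (fun x hx => ?_)
  rw [interior_Ici] at hx
  rw [(hp_deriv x hx).deriv]
  exact hp'_pos x hx

lemma p_nonneg (hp_cont : ContinuousOn p (Ici 0)) (hp0 : p 0 = 0)
    (hp_deriv : ∀ x : ℝ, 0 < x → HasDerivAt p (p' x) x)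
    (hp'_pos : ∀ x : ℝ, 0 < x → 0 < p' x) {s : ℝ} (hs : 0 ≤ s) : 0 ≤ p s := by
  rcases eq_or_lt_of_le hs with h | h
  · rw [← h, hp0]
  · have := p_strictMono hp_cont hp_deriv hp'_pos (self_mem_Ici) (le_of_lt h) h
    rw [hp0] at this; exact this.le

lemma p_pos (hp_cont : ContinuousOn p (Ici 0)) (hp0 : p 0 = 0)
    (hp_deriv : ∀ x : ℝ, 0 < x → HasDerivAt p (p' x) x)
    (hp'_pos : ∀ x : ℝ, 0 < x → 0 < p' x) {s : ℝ} (hs : 0 < s) : 0 < p s := by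
  have := p_strictMono hp_cont hp_deriv hp'_pos (self_mem_Ici) hs.le hs
  rwa [hp0] at this

lemma F_nonneg (hp_cont : ContinuousOn p (Ici 0)) (hp0 : p 0 = 0)
    (hp_deriv : ∀ x : ℝ, 0 < x → HasDerivAt p (p' x) x)
    (hp'_pos : ∀ x : ℝ, 0 < x → 0 < p' x) {x : ℝ} (hx : 0 ≤ x) :
    0 ≤ ∫ s in (0:ℝ)..x, p s / s ^ 2 := by
  refine intervalIntegral.integral_nonneg hx (fun u hu => ?_)
  exact div_nonneg (p_nonneg hp_cont hp0 hp_deriv hp'_pos hu.1) (sq_nonneg u)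

lemma HpAux_pos (hp_cont : ContinuousOn p (Ici 0)) (hp0 : p 0 = 0)
    (hp_deriv : ∀ x : ℝ, 0 < x → HasDerivAt p (p' x) x)
    (hp'_pos : ∀ x : ℝ, 0 < x → 0 < p' x) {r : ℝ} (hr : 0 < r) : 0 < HpAux p r :=
  add_pos_of_nonneg_of_pos (F_nonneg hp_cont hp0 hp_deriv hp'_pos hr.le)
    (div_pos (p_pos hp_cont hp0 hp_deriv hp'_pos hr) hr)

lemma HpAux_mono (hp_cont : ContinuousOn p (Ici 0))
    (hp_deriv : ∀ x : ℝ, 0 < x → HasDerivAt p (p' x) x)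
    (hp'_pos : ∀ x : ℝ, 0 < x → 0 < p' x)
    (hp_int : IntegrableOn (fun s : ℝ => p s / s ^ 2) (Ioo 0 1)) :
    StrictMonoOn (HpAux p) (Ioi 0) := by
  refine strictMonoOn_of_deriv_pos (convex_Ioi 0)
    (fun t ht => (HpAux_deriv hp_cont hp_deriv hp_int ht).continuousAt.continuousWithinAt)
    (fun t ht => ?_)
  rw [interior_Ioi] at ht
  rw [(HpAux_deriv hp_cont hp_deriv hp_int ht).deriv]
  exact div_pos (hp'_pos t ht) ht

lemma Hpot_mono (hp_cont : ContinuousOn p (Ici 0)) (hp0 : p 0 = 0)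
    (hp_deriv : ∀ x : ℝ, 0 < x → HasDerivAt p (p' x) x)
    (hp'_pos : ∀ x : ℝ, 0 < x → 0 < p' x)
    (hp_int : IntegrableOn (fun s : ℝ => p s / s ^ 2) (Ioo 0 1)) :
    MonotoneOn (Hpot p) (Ioi 0) := by
  refine monoAux (convex_Ioi 0) (fun t ht => Hpot_deriv hp_cont hp_int ht) (fun t ht => ?_)
  rw [interior_Ioi] at ht
  exact (HpAux_pos hp_cont hp0 hp_deriv hp'_pos ht).le

lemma Erel_zero (hp_cont : ContinuousOn p (Ici 0))
    (hp_int : IntegrableOn (fun s : ℝ => p s / s ^ 2) (Ioo 0 1)) {r : ℝ} (hr : 0 < r) :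
    Erel p 0 r = p r := by
  unfold Erel
  rw [deriv_Hpot hp_cont hp_int hr]
  unfold HpAux Hpot
  rw [intervalIntegral.integral_same]
  field_simp
  ring

end derivs

lemma key (γ a₀ : ℝ) (p p' : ℝ → ℝ)
    (hγ : 3 / 2 < γ) (ha₀ : 0 < a₀)
    (hp_cont : ContinuousOn p (Ici 0))
    (hp0 : p 0 = 0)
    (hp_deriv : ∀ x : ℝ, 0 < x → HasDerivAt p (p' x) x)
    (hp'_cont : ContinuousOn p' (Ioi 0))
    (hp'_pos : ∀ x : ℝ, 0 < x → 0 < p' x)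
    (hp_lim : Tendsto (fun ρ : ℝ => p' ρ / ρ ^ (γ - 1)) atTop (nhds a₀))
    (hp_int : IntegrableOn (fun s : ℝ => p s / s ^ 2) (Ioo 0 1))
    (a b : ℝ) (ha : 0 < a) (hab : a < b) :
    ∃ C : ℝ, 0 < C ∧ C ≤ 1 / 2 ∧ ∀ ρ r : ℝ, 0 ≤ ρ → r ∈ Icc a b →
      (if a / 2 ≤ ρ ∧ ρ ≤ 2 * b then C * (ρ - r) ^ 2 ≤ Erel p ρ r
       else C * (1 + ρ ^ γ) ≤ Erel p ρ r) := by
  have hγ0 : 0 < γ := by linarith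
  have hb : 0 < b := ha.trans hab
  have ha2 : 0 < a / 2 := by linarith
  have hI : a / 2 < 2 * b := by linarith
  -- minimum of p' s / s on the essential interval
  obtain ⟨s₀, hs₀, hmin⟩ : ∃ s₀ ∈ Icc (a/2) (2*b),
      IsMinOn (fun s => p' s / s) (Icc (a/2) (2*b)) s₀ := by
    refine IsCompact.exists_isMinOn isCompact_Icc ⟨a/2, by constructor <;> linarith⟩ ?_
    refine ContinuousOn.div (hp'_cont.mono ?_) continuousOn_id (fun s hs => ?_)
    · intro s hs; exact lt_of_lt_of_le ha2 hs.1
    · exact ne_of_gt (lt_of_lt_of_le ha2 hs.1)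
  set m : ℝ := p' s₀ / s₀ with hm
  have hs₀pos : 0 < s₀ := lt_of_lt_of_le ha2 hs₀.1
  have hmpos : 0 < m := div_pos (hp'_pos s₀ hs₀pos) hs₀pos
  have hmle : ∀ t ∈ Icc (a/2) (2*b), m ≤ p' t / t := fun t ht => hmin ht
  -- essential bound
  have ess : ∀ r ∈ Icc a b, ∀ ρ ∈ Icc (a/2) (2*b), m/2 * (ρ - r)^2 ≤ Erel p ρ r := by
    intro r hr ρ hρ
    have hra : 0 < r := lt_of_lt_of_le ha hr.1
    have hrI : r ∈ Icc (a/2) (2*b) := ⟨by linarith [hr.1], by linarith [hr.2]⟩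
    set φ : ℝ → ℝ := fun t => Erel p t r - m/2 * (t - r)^2 with hφ
    set φ' : ℝ → ℝ := fun t => HpAux p t - HpAux p r - m * (t - r) with hφ'
    have hφd : ∀ t : ℝ, 0 < t → HasDerivAt φ (φ' t) t := by
      intro t ht
      have h1 := (Erel_deriv hp_cont hp_int hra ht).sub
        ((((hasDerivAt_id t).sub_const r).pow 2).const_mul (m/2))
      refine h1.congr_deriv ?_
      simp [hφ']
      ring
    have hφ'd : ∀ t : ℝ, 0 < t → HasDerivAt φ' (p' t / t - m) t := by
      intro t ht
      have h1 := ((HpAux_deriv hp_cont hp_deriv hp_int ht).sub_const (HpAux p r)).sub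
        (((hasDerivAt_id t).sub_const r).const_mul m)
      refine h1.congr_deriv ?_
      ring
    have hφ'mono : MonotoneOn φ' (Icc (a/2) (2*b)) := by
      refine monoAux (convex_Icc _ _)
        (fun t ht => hφ'd t (lt_of_lt_of_le ha2 ht.1)) (fun t ht => ?_)
      rw [interior_Icc] at ht
      have := hmle t ⟨ht.1.le, ht.2.le⟩
      linarith
    have hφ'r : φ' r = 0 := by simp [hφ']
    have hφr : φ r = 0 := by simp [hφ', hφ, Erel]
    rcases le_or_gt r ρ with hc | hc
    · have hmono : MonotoneOn φ (Icc r (2*b)) := by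
        refine monoAux (convex_Icc _ _)
          (fun t ht => hφd t (lt_of_lt_of_le hra ht.1)) (fun t ht => ?_)
        rw [interior_Icc] at ht
        have h2 := hφ'mono hrI ⟨by linarith [ht.1, hrI.1], ht.2.le⟩ ht.1.le
        rw [hφ'r] at h2
        exact h2
      have := hmono ⟨le_refl r, by linarith [hr.2]⟩ ⟨hc, hρ.2⟩ hc
      rw [hφr] at this
      simp only [hφ] at this
      linarith
    · have hanti : AntitoneOn φ (Icc (a/2) r) := by
        refine antiAux (convex_Icc _ _)
          (fun t ht => hφd t (lt_of_lt_of_le ha2 ht.1)) (fun t ht => ?_)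
        rw [interior_Icc] at ht
        have h2 := hφ'mono ⟨ht.1.le, by linarith [ht.2, hrI.2]⟩ hrI ht.2.le
        rw [hφ'r] at h2
        exact h2
      have := hanti ⟨hρ.1, hc.le⟩ ⟨hrI.1, le_refl r⟩ hc.le
      rw [hφr] at this
      simp only [hφ] at this
      linarith

  -- monotonicity of Erel in ρ on each side of r
  have hEmono : ∀ r, 0 < r → ∀ x y : ℝ, r ≤ x → x ≤ y → Erel p x r ≤ Erel p y r := by
    intro r hr x y hx hxy
    have : MonotoneOn (fun t => Erel p t r) (Icc r y) := by
      refine monoAux (convex_Icc _ _)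
        (fun t ht => Erel_deriv hp_cont hp_int hr (lt_of_lt_of_le hr ht.1)) (fun t ht => ?_)
      rw [interior_Icc] at ht
      have := (HpAux_mono hp_cont hp_deriv hp'_pos hp_int).monotoneOn
        (mem_Ioi.mpr hr) (mem_Ioi.mpr (hr.trans ht.1)) ht.1.le
      linarith
    exact this ⟨hx, hxy.trans_eq rfl⟩ ⟨hx.trans hxy, le_refl y⟩ hxy
  have hEanti : ∀ r, 0 < r → ∀ x y : ℝ, 0 < x → x ≤ y → y ≤ r → Erel p y r ≤ Erel p x r := by
    intro r hr x y hx hxy hyr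
    have : AntitoneOn (fun t => Erel p t r) (Icc x r) := by
      refine antiAux (convex_Icc _ _)
        (fun t ht => Erel_deriv hp_cont hp_int hr (lt_of_lt_of_le hx ht.1)) (fun t ht => ?_)
      rw [interior_Icc] at ht
      have := (HpAux_mono hp_cont hp_deriv hp'_pos hp_int).monotoneOn
        (mem_Ioi.mpr (hx.trans ht.1)) (mem_Ioi.mpr hr) ht.2.le
      linarith
    have h2 := this ⟨le_refl x, hxy.trans hyr⟩ ⟨hxy, hyr⟩ hxy
    exact h2
  -- small residual bound
  set c₁ : ℝ := m/2 * (a/2)^2 with hc₁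
  have hc₁pos : 0 < c₁ := by positivity
  have small : ∀ r ∈ Icc a b, ∀ ρ : ℝ, 0 < ρ → ρ < a/2 → c₁ ≤ Erel p ρ r := by
    intro r hr ρ hρ hρa
    have hra : 0 < r := lt_of_lt_of_le ha hr.1
    have h1 : Erel p (a/2) r ≤ Erel p ρ r :=
      hEanti r hra ρ (a/2) hρ hρa.le (by linarith [hr.1])
    have h2 := ess r hr (a/2) ⟨le_refl _, by linarith⟩
    have h3 : (a/2)^2 ≤ (a/2 - r)^2 := by nlinarith [hr.1]
    nlinarith
  -- mid residual bound
  set c₂ : ℝ := m/2 * b^2 with hc₂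
  have hc₂pos : 0 < c₂ := by positivity
  have mid : ∀ r ∈ Icc a b, ∀ ρ : ℝ, 2*b < ρ → c₂ ≤ Erel p ρ r := by
    intro r hr ρ hρ
    have hra : 0 < r := lt_of_lt_of_le ha hr.1
    have h1 : Erel p (2*b) r ≤ Erel p ρ r :=
      hEmono r hra (2*b) ρ (by linarith [hr.2]) hρ.le
    have h2 := ess r hr (2*b) ⟨by linarith, le_refl _⟩
    have h3 : b^2 ≤ (2*b - r)^2 := by nlinarith [hr.1, hr.2]
    nlinarith
  -- large: asymptotic growth
  obtain ⟨R₀, hR₀⟩ : ∃ R₀ : ℝ, ∀ s ≥ R₀, a₀/2 ≤ p' s / s ^ (γ-1) :=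
    eventually_atTop.mp (hp_lim.eventually (eventually_ge_nhds (by linarith)))
  set R : ℝ := max R₀ (max b 1) with hR
  have hRb : b ≤ R := le_max_of_le_right (le_max_left _ _)
  have hR1 : (1:ℝ) ≤ R := le_max_of_le_right (le_max_right _ _)
  have hRpos : 0 < R := lt_of_lt_of_le one_pos hR1
  have hp'low : ∀ s : ℝ, R ≤ s → a₀/2 * s ^ (γ-1) ≤ p' s := by
    intro s hs
    have hspos : 0 < s := lt_of_lt_of_le hRpos hs
    have h1 := hR₀ s (le_trans (le_max_left _ _) hs)
    have h2 : (0:ℝ) < s ^ (γ-1) := Real.rpow_pos_of_pos hspos _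
    rw [le_div_iff₀ h2] at h1
    linarith
  set c₃ : ℝ := a₀ / (2*γ) with hc₃
  have hc₃pos : 0 < c₃ := by positivity
  set D : ℝ := c₃ * R ^ γ with hD
  have hDpos : 0 < D := by positivity
  -- p t ≥ c₃ t^γ - D for t ≥ R
  have plow : ∀ t : ℝ, R ≤ t → c₃ * t ^ γ - D ≤ p t := by
    intro t ht
    have hmono : MonotoneOn (fun t => p t - c₃ * t ^ γ) (Ici R) := by
      refine monoAux (f' := fun t => p' t - c₃ * (γ * t ^ (γ-1))) (convex_Ici R) (fun t ht => ?_) (fun t ht => ?_)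
      · have htpos : 0 < t := lt_of_lt_of_le hRpos ht
        exact (hp_deriv t htpos).sub
          ((Real.hasDerivAt_rpow_const (Or.inl htpos.ne')).const_mul c₃)
      · rw [interior_Ici] at ht
        have h1 := hp'low t ht.le
        have h2 : c₃ * (γ * t ^ (γ-1)) = a₀/2 * t ^ (γ-1) := by
          rw [hc₃]; field_simp
        show 0 ≤ p' t - c₃ * (γ * t ^ (γ-1))
        rw [h2]; linarith
    have h2 := hmono (self_mem_Ici) (mem_Ici.mpr ht) ht
    have h3 : 0 ≤ p R := p_nonneg hp_cont hp0 hp_deriv hp'_pos hRpos.le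
    simp only [hD] at *
    nlinarith
  -- HpAux lower bound for t ≥ R
  have Hplow : ∀ t : ℝ, R ≤ t → c₃ * t ^ (γ-1) - D/R ≤ HpAux p t := by
    intro t ht
    have htpos : 0 < t := lt_of_lt_of_le hRpos ht
    have h1 : p t / t ≤ HpAux p t := by
      unfold HpAux
      have := F_nonneg hp_cont hp0 hp_deriv hp'_pos (p := p) (p' := p') htpos.le
      linarith
    have h2 : (c₃ * t ^ γ - D) / t ≤ p t / t :=
      (div_le_div_iff_of_pos_right htpos).mpr (plow t ht)
    have h3 : (c₃ * t ^ γ - D) / t = c₃ * t ^ (γ-1) - D/t := by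
      rw [sub_div, mul_div_assoc, ← Real.rpow_sub_one htpos.ne']
    have h4 : D/t ≤ D/R := div_le_div_of_nonneg_left hDpos.le hRpos ht
    linarith

  set c₄ : ℝ := c₃ / γ with hc₄
  have hc₄pos : 0 < c₄ := by positivity
  -- Hpot lower bound
  have Hlow : ∀ t : ℝ, R ≤ t → c₄ * t ^ γ - (D/R) * t - c₄ * R ^ γ ≤ Hpot p t := by
    intro t ht
    have hmono : MonotoneOn (fun t => Hpot p t - (c₄ * t ^ γ - (D/R) * t)) (Ici R) := by
      refine monoAux (f' := fun t => HpAux p t - (c₄ * (γ * t ^ (γ-1)) - (D/R) * 1))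
        (convex_Ici R) (fun t ht => ?_) (fun t ht => ?_)
      · have htpos : 0 < t := lt_of_lt_of_le hRpos ht
        exact (Hpot_deriv hp_cont hp_int htpos).sub
          (((Real.hasDerivAt_rpow_const (Or.inl htpos.ne')).const_mul c₄).sub
            ((hasDerivAt_id t).const_mul (D/R)))
      · rw [interior_Ici] at ht
        have h1 := Hplow t ht.le
        have h2 : c₄ * (γ * t ^ (γ-1)) = c₃ * t ^ (γ-1) := by
          rw [hc₄]; field_simp
        show (0:ℝ) ≤ HpAux p t - (c₄ * (γ * t ^ (γ-1)) - (D/R) * 1)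
        rw [h2]; linarith
    have h2 := hmono (self_mem_Ici) (mem_Ici.mpr ht) ht
    have h3 : 0 ≤ Hpot p R :=
      mul_nonneg hRpos.le (F_nonneg hp_cont hp0 hp_deriv hp'_pos (p' := p') hRpos.le)
    have h4 : 0 ≤ (D/R) * R := by positivity
    simp only at h2
    linarith
  set K₁ : ℝ := D/R + HpAux p b with hK₁
  set K₂ : ℝ := c₄ * R ^ γ + Hpot p b with hK₂
  have hHpb : 0 < HpAux p b := HpAux_pos hp_cont hp0 hp_deriv hp'_pos hb
  have Elarge : ∀ r ∈ Icc a b, ∀ ρ : ℝ, R ≤ ρ → c₄ * ρ ^ γ - K₁ * ρ - K₂ ≤ Erel p ρ r := by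
    intro r hr ρ hρ
    have hra : 0 < r := lt_of_lt_of_le ha hr.1
    have hρpos : 0 < ρ := lt_of_lt_of_le hRpos hρ
    have hrρ : r ≤ ρ := hr.2.trans (hRb.trans hρ)
    have e1 : Erel p ρ r = Hpot p ρ - HpAux p r * (ρ - r) - Hpot p r := by
      rw [Erel, deriv_Hpot hp_cont hp_int hra]
    have h1 : HpAux p r ≤ HpAux p b :=
      (HpAux_mono hp_cont hp_deriv hp'_pos hp_int).monotoneOn
        (mem_Ioi.mpr hra) (mem_Ioi.mpr hb) hr.2
    have h2 : 0 < HpAux p r := HpAux_pos hp_cont hp0 hp_deriv hp'_pos hra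
    have h3 : HpAux p r * (ρ - r) ≤ HpAux p b * ρ := by nlinarith
    have h4 : Hpot p r ≤ Hpot p b :=
      Hpot_mono hp_cont hp0 hp_deriv hp'_pos hp_int (mem_Ioi.mpr hra) (mem_Ioi.mpr hb) hr.2
    have h5 := Hlow ρ hρ
    have h7 : K₁ * ρ = (D/R)*ρ + HpAux p b * ρ := by rw [hK₁]; ring
    have h8 : K₂ = c₄ * R ^ γ + Hpot p b := hK₂
    rw [e1]
    clear_value c₄ K₁ K₂ D c₃ R
    linarith
  -- choice of M
  have htend : Tendsto (fun x : ℝ => x * (c₄/2 * x ^ (γ-1) - K₁)) atTop atTop := by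
    refine tendsto_id.atTop_mul_atTop₀ ?_
    refine tendsto_atTop_add_const_right atTop (-K₁) ?_
    exact (tendsto_rpow_atTop (by linarith : 0 < γ - 1)).const_mul_atTop (by positivity)
  obtain ⟨M₀, hM₀⟩ := eventually_atTop.mp (htend.eventually_ge_atTop K₂)
  set M : ℝ := max M₀ (max R 1) with hM
  have hM1 : (1:ℝ) ≤ M := le_max_of_le_right (le_max_right _ _)
  have hMR : R ≤ M := le_max_of_le_right (le_max_left _ _)
  have hMpos : (0:ℝ) < M := lt_of_lt_of_le one_pos hM1
  have large : ∀ r ∈ Icc a b, ∀ ρ : ℝ, M ≤ ρ → c₄/2 * ρ ^ γ ≤ Erel p ρ r ∧ 1 ≤ ρ ^ γ := by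
    intro r hr ρ hρ
    have hρ1 : (1:ℝ) ≤ ρ := hM1.trans hρ
    have hρpos : 0 < ρ := lt_of_lt_of_le one_pos hρ1
    have h1 := hM₀ ρ (le_trans (le_max_left _ _) hρ)
    have hid : ρ * (c₄/2 * ρ ^ (γ-1) - K₁) = c₄/2 * ρ ^ γ - K₁ * ρ := by
      rw [Real.rpow_sub_one hρpos.ne']
      field_simp
    rw [hid] at h1
    have h2 := Elarge r hr ρ (hMR.trans hρ)
    constructor
    · clear_value c₄ K₁ K₂ D c₃ R M
      linarith
    · calc (1:ℝ) = 1 ^ γ := (Real.one_rpow γ).symm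
        _ ≤ ρ ^ γ := Real.rpow_le_rpow zero_le_one hρ1 hγ0.le
  -- the constant
  have hden1 : (0:ℝ) < 1 + (a/2) ^ γ := by positivity
  have hden2 : (0:ℝ) < 1 + M ^ γ := by positivity
  have hpa : 0 < p a := p_pos hp_cont hp0 hp_deriv hp'_pos ha
  refine ⟨min (1/2) (min (m/2) (min (c₁/(1+(a/2)^γ)) (min (p a) (min (c₂/(1+M^γ)) (c₄/4))))),
    by positivity, min_le_left _ _, ?_⟩
  set C : ℝ := min (1/2) (min (m/2) (min (c₁/(1+(a/2)^γ)) (min (p a) (min (c₂/(1+M^γ)) (c₄/4)))))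
    with hC
  have hCpos : 0 < C := by rw [hC]; positivity
  have hCm : C ≤ m/2 := le_trans (min_le_right _ _) (min_le_left _ _)
  have hCc₁ : C ≤ c₁/(1+(a/2)^γ) :=
    le_trans (min_le_right _ _) (le_trans (min_le_right _ _) (min_le_left _ _))
  have hCpa : C ≤ p a := le_trans (min_le_right _ _) (le_trans (min_le_right _ _)
    (le_trans (min_le_right _ _) (min_le_left _ _)))
  have hCc₂ : C ≤ c₂/(1+M^γ) := le_trans (min_le_right _ _) (le_trans (min_le_right _ _)
    (le_trans (min_le_right _ _) (le_trans (min_le_right _ _) (min_le_left _ _))))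
  have hCc₄ : C ≤ c₄/4 := le_trans (min_le_right _ _) (le_trans (min_le_right _ _)
    (le_trans (min_le_right _ _) (le_trans (min_le_right _ _) (min_le_right _ _))))
  intro ρ r hρ0 hr
  split_ifs with hcase
  · -- essential
    have h1 := ess r hr ρ ⟨hcase.1, hcase.2⟩
    have h2 : C * (ρ - r)^2 ≤ m/2 * (ρ - r)^2 :=
      mul_le_mul_of_nonneg_right hCm (sq_nonneg _)
    linarith
  · -- residual
    rw [not_and_or] at hcase
    push_neg at hcase
    rcases hcase with hsmall | hbig
    · rcases eq_or_lt_of_le hρ0 with hz | hρpos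
      · -- ρ = 0
        rw [← hz, Erel_zero hp_cont hp_int (lt_of_lt_of_le ha hr.1)]
        rw [Real.zero_rpow hγ0.ne']
        have h2 : p a ≤ p r :=
          (p_strictMono hp_cont hp_deriv hp'_pos).monotoneOn
            (mem_Ici.mpr ha.le) (mem_Ici.mpr (ha.le.trans hr.1)) hr.1
        linarith
      · have h1 := small r hr ρ hρpos hsmall
        have h2 : ρ ^ γ ≤ (a/2) ^ γ := Real.rpow_le_rpow hρ0 hsmall.le hγ0.le
        have h3 : C * (1 + (a/2)^γ) ≤ c₁ := (le_div_iff₀ hden1).mp hCc₁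
        have h4 : C * (1 + ρ^γ) ≤ C * (1 + (a/2)^γ) :=
          mul_le_mul_of_nonneg_left (by linarith) hCpos.le
        linarith
    · rcases le_or_gt ρ M with hc | hc
      · have h1 := mid r hr ρ hbig
        have h2 : ρ ^ γ ≤ M ^ γ := Real.rpow_le_rpow hρ0 hc hγ0.le
        have h3 : C * (1 + M^γ) ≤ c₂ := (le_div_iff₀ hden2).mp hCc₂
        have h4 : C * (1 + ρ^γ) ≤ C * (1 + M^γ) :=
          mul_le_mul_of_nonneg_left (by linarith) hCpos.le
        linarith
      · obtain ⟨h1, h2⟩ := large r hr ρ hc.le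
        have h3 : 1 + ρ^γ ≤ 2 * ρ^γ := by linarith
        have h4 : C * (1 + ρ^γ) ≤ (c₄/4) * (2 * ρ^γ) :=
          mul_le_mul hCc₄ h3 (by linarith) (by positivity)
        linarith


/-- Integrated lower bound for the relative entropy functional: the relative entropy
dominates (up to a constant `C = C(a,b) > 0`) the residual/essential decomposition,
the relative kinetic energy and the radiative distance.  Both sides may be `+∞`. -/
theorem stmt_1 (γ a₀ : ℝ) (p p' : ℝ → ℝ)
    (hγ : 3 / 2 < γ) (ha₀ : 0 < a₀)
    (hp_cont : ContinuousOn p (Ici 0))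
    (hp0 : p 0 = 0)
    (hp_deriv : ∀ x : ℝ, 0 < x → HasDerivAt p (p' x) x)
    (hp'_cont : ContinuousOn p' (Ioi 0))
    (hp'_pos : ∀ x : ℝ, 0 < x → 0 < p' x)
    (hp_lim : Tendsto (fun ρ : ℝ => p' ρ / ρ ^ (γ - 1)) atTop (nhds a₀))
    (hp_int : IntegrableOn (fun s : ℝ => p s / s ^ 2) (Ioo 0 1))
    (Ω : Set (EuclideanSpace ℝ (Fin 3)))
    (hΩb : Bornology.IsBounded Ω) (hΩm : MeasurableSet Ω)
    (a b : ℝ) (ha : 0 < a) (hab : a < b) :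
    ∃ C : ℝ, 0 < C ∧
      ∀ (ρ : EuclideanSpace ℝ (Fin 3) → ℝ)
        (u V : EuclideanSpace ℝ (Fin 3) → EuclideanSpace ℝ (Fin 3))
        (r : EuclideanSpace ℝ (Fin 3) → ℝ)
        (I J : EuclideanSpace ℝ (Fin 3) →
          Metric.sphere (0 : EuclideanSpace ℝ (Fin 3)) 1 → ℝ → ℝ),
        Measurable ρ → Measurable u → Measurable V → Measurable r →
        (∀ x, 0 ≤ ρ x) → (∀ x, r x ∈ Icc a b) →
        Measurable (fun q : EuclideanSpace ℝ (Fin 3) ×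
          Metric.sphere (0 : EuclideanSpace ℝ (Fin 3)) 1 × ℝ => I q.1 q.2.1 q.2.2) →
        Measurable (fun q : EuclideanSpace ℝ (Fin 3) ×
          Metric.sphere (0 : EuclideanSpace ℝ (Fin 3)) 1 × ℝ => J q.1 q.2.1 q.2.2) →
        ENNReal.ofReal C *
          ∫⁻ x in Ω,
            ((if a / 2 ≤ ρ x ∧ ρ x ≤ 2 * b then ENNReal.ofReal ((ρ x - r x) ^ 2)
              else 1 + ENNReal.ofReal (ρ x ^ γ))
             + ENNReal.ofReal (ρ x * ‖u x - V x‖ ^ 2)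
             + ∫⁻ ν in Ioi (0:ℝ), ∫⁻ ς, ENNReal.ofReal ((I x ς ν - J x ς ν) ^ 2)
                 ∂sphereMeasure)
        ≤ ∫⁻ x in Ω,
            (ENNReal.ofReal (1 / 2 * ρ x * ‖u x - V x‖ ^ 2)
             + ENNReal.ofReal (Erel p (ρ x) (r x))
             + (1 / 2) * ∫⁻ ν in Ioi (0:ℝ), ∫⁻ ς, ENNReal.ofReal ((I x ς ν - J x ς ν) ^ 2)
                 ∂sphereMeasure) := by

  obtain ⟨C, hCpos, hC12, hkey⟩ := key γ a₀ p p' hγ ha₀ hp_cont hp0 hp_deriv hp'_cont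
    hp'_pos hp_lim hp_int a b ha hab
  refine ⟨C, hCpos, ?_⟩
  intro ρ u V r I J _ _ _ _ hρ0 hr _ _
  rw [← lintegral_const_mul' _ _ ENNReal.ofReal_ne_top]
  refine lintegral_mono (fun x => ?_)
  rw [mul_add, mul_add]
  have hhalf : ENNReal.ofReal C ≤ 1/2 := by
    have h1 : ENNReal.ofReal C ≤ ENNReal.ofReal (1/2) := ENNReal.ofReal_le_ofReal hC12
    have h2 : ENNReal.ofReal (1/2 : ℝ) = 1/2 := by
      rw [ENNReal.ofReal_div_of_pos (by norm_num)]
      norm_num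
    rwa [h2] at h1
  rw [add_comm (ENNReal.ofReal (1 / 2 * ρ x * ‖u x - V x‖ ^ 2))
    (ENNReal.ofReal (Erel p (ρ x) (r x)))]
  refine add_le_add (add_le_add ?_ ?_) ?_
  · -- branch term
    have hk := hkey (ρ x) (r x) (hρ0 x) (hr x)
    split_ifs with h <;> split_ifs at hk
    · rw [← ENNReal.ofReal_mul hCpos.le]
      exact ENNReal.ofReal_le_ofReal hk
    · have h1 : (1 : ENNReal) + ENNReal.ofReal (ρ x ^ γ) = ENNReal.ofReal (1 + ρ x ^ γ) := by
        rw [ENNReal.ofReal_add zero_le_one (Real.rpow_nonneg (hρ0 x) γ), ENNReal.ofReal_one]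
      rw [h1, ← ENNReal.ofReal_mul hCpos.le]
      exact ENNReal.ofReal_le_ofReal hk
  · -- kinetic term
    rw [← ENNReal.ofReal_mul hCpos.le]
    refine ENNReal.ofReal_le_ofReal ?_
    have h1 : 0 ≤ ρ x * ‖u x - V x‖ ^ 2 := mul_nonneg (hρ0 x) (sq_nonneg _)
    nlinarith
  · -- radiative term
    exact mul_le_mul_left hhalf _
end

section
/- Let ω ⊂ ℝ² be a bounded measurable set, let r : ω → ℝ be bounded and measurable, let ε > 0 and x_h ∈ ℝ². Then for a.e. x₃ ∈ (0,1) the integral F(x₃) := ∫_{ω×(0,1)} ε r(y_h)(x₃ − y₃)/(|x_h − y_h|² + ε²(x₃ − y₃)²)^{3/2} dy converges absolutely, and ∫₀^1 F(x₃) dx₃ = 0; that is, the x₃-average over (0,1) of the vertical component of the rescaled self-gravitation kernel vanishes identically for every ε > 0. -/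
open MeasureTheory Set

open Metric in
private instance stmt10_haar_prod :
    (volume : Measure (EuclideanSpace ℝ (Fin 2) × ℝ)).IsAddHaarMeasure := by
  rw [Measure.volume_eq_prod]
  exact Measure.prod.instIsAddHaarMeasure _ _

private lemma stmt10_finrank : Module.finrank ℝ (EuclideanSpace ℝ (Fin 2) × ℝ) = 3 := by
  simp [Module.finrank_prod]

private lemma stmt10_volume_singleton (p : EuclideanSpace ℝ (Fin 2) × ℝ) :
    (volume : Measure (EuclideanSpace ℝ (Fin 2) × ℝ)) {p} = 0 := by
  rw [Measure.volume_eq_prod, ← Prod.mk.eta (p := p), ← Set.singleton_prod_singleton,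
    Measure.prod_prod]
  simp

open Metric in
/-- Local integrability of the Riesz-type kernel `‖y - p‖⁻²` on a bounded set
in the 3-dimensional space `EuclideanSpace ℝ (Fin 2) × ℝ`. -/
private lemma stmt10_integrableOn_inv_norm_sq {p : EuclideanSpace ℝ (Fin 2) × ℝ}
    {S : Set (EuclideanSpace ℝ (Fin 2) × ℝ)}
    (hSm : MeasurableSet S) (hSb : Bornology.IsBounded S) :
    IntegrableOn (fun y : EuclideanSpace ℝ (Fin 2) × ℝ => (‖y - p‖ ^ 2)⁻¹) S := by
  obtain ⟨R, hR, hSR⟩ := hSb.subset_ball_lt 0 p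
  have hmeas : Measurable fun y : EuclideanSpace ℝ (Fin 2) × ℝ => (‖y - p‖ ^ 2)⁻¹ :=
    ((measurable_id.sub measurable_const).norm.pow_const 2).inv
  refine ⟨hmeas.aestronglyMeasurable, ?_⟩
  rw [hasFiniteIntegral_iff_norm]
  set g : EuclideanSpace ℝ (Fin 2) × ℝ → ENNReal :=
    fun y => ENNReal.ofReal ((‖y - p‖ ^ 2)⁻¹) with hg
  have h1 : ∫⁻ y in S, ENNReal.ofReal ‖(‖y - p‖ ^ 2)⁻¹‖ = ∫⁻ y in S, g y := by
    apply lintegral_congr; intro y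
    rw [Real.norm_eq_abs, abs_of_nonneg (by positivity)]
  rw [h1]
  set A : ℕ → Set (EuclideanSpace ℝ (Fin 2) × ℝ) := fun n =>
    ball p (R * (2⁻¹ : ℝ) ^ n) \ ball p (R * (2⁻¹ : ℝ) ^ (n + 1)) with hA
  have hcover : S ⊆ {p} ∪ ⋃ n, A n := by
    intro y hy
    rcases eq_or_ne y p with h | h
    · exact Or.inl (by simp [h])
    right
    have ht0 : 0 < dist y p := dist_pos.2 h
    have htR : dist y p < R := mem_ball.1 (hSR hy)
    set t : ℝ := dist y p with hts
    have hq1 : t / R < 1 := (div_lt_one hR).2 htR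
    have hq0 : 0 < t / R := div_pos ht0 hR
    have hex : ∃ m : ℕ, (2⁻¹ : ℝ) ^ m ≤ t / R := by
      obtain ⟨m, hm⟩ := exists_pow_lt_of_lt_one hq0 (by norm_num : (2⁻¹ : ℝ) < 1)
      exact ⟨m, hm.le⟩
    have hm0 : Nat.find hex ≠ 0 := by
      intro h0
      have hsp := Nat.find_spec hex
      rw [h0, pow_zero] at hsp
      linarith
    obtain ⟨n, hn⟩ := Nat.exists_eq_succ_of_ne_zero hm0
    have hm : (2⁻¹ : ℝ) ^ (n + 1) ≤ t / R := by
      have hsp := Nat.find_spec hex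
      rwa [hn] at hsp
    have hnot : ¬ ((2⁻¹ : ℝ) ^ n ≤ t / R) := Nat.find_min hex (by omega)
    have hlt : t / R < (2⁻¹ : ℝ) ^ n := lt_of_not_ge hnot
    refine mem_iUnion.2 ⟨n, ?_, ?_⟩
    · rw [mem_ball]
      calc dist y p = (t / R) * R := by field_simp; exact hts.symm
        _ < (2⁻¹ : ℝ) ^ n * R := by
            exact mul_lt_mul_of_pos_right hlt hR
        _ = R * (2⁻¹ : ℝ) ^ n := mul_comm _ _
    · rw [mem_ball, not_lt]
      calc R * (2⁻¹ : ℝ) ^ (n + 1) = (2⁻¹ : ℝ) ^ (n + 1) * R := mul_comm _ _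
        _ ≤ (t / R) * R := mul_le_mul_of_nonneg_right hm hR.le
        _ = dist y p := by field_simp; exact hts
  set ν : ENNReal := volume (ball (0 : EuclideanSpace ℝ (Fin 2) × ℝ) 1) with hν
  have hν_fin : ν < ⊤ := measure_ball_lt_top
  have hterm : ∀ n : ℕ, ∫⁻ y in A n, g y ≤
      ENNReal.ofReal (4 * R * (2⁻¹ : ℝ) ^ n) * ν := by
    intro n
    have hrn : (0 : ℝ) < R * (2⁻¹ : ℝ) ^ (n + 1) := by positivity
    have hbd : ∀ y ∈ A n, g y ≤ ENNReal.ofReal (((R * (2⁻¹ : ℝ) ^ (n + 1)) ^ 2)⁻¹) := by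
      intro y hy
      apply ENNReal.ofReal_le_ofReal
      have h1 : R * (2⁻¹ : ℝ) ^ (n + 1) ≤ ‖y - p‖ := by
        have := hy.2
        rw [mem_ball, not_lt] at this
        rwa [← dist_eq_norm]
      have h2 : (R * (2⁻¹ : ℝ) ^ (n + 1)) ^ 2 ≤ ‖y - p‖ ^ 2 := by
        apply pow_le_pow_left₀ hrn.le h1
      exact inv_anti₀ (by positivity) h2
    calc ∫⁻ y in A n, g y
        ≤ ∫⁻ _ in A n, ENNReal.ofReal (((R * (2⁻¹ : ℝ) ^ (n + 1)) ^ 2)⁻¹) :=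
          setLIntegral_mono' (measurableSet_ball.diff measurableSet_ball) hbd
      _ = ENNReal.ofReal (((R * (2⁻¹ : ℝ) ^ (n + 1)) ^ 2)⁻¹) * volume (A n) :=
          setLIntegral_const _ _
      _ ≤ ENNReal.ofReal (((R * (2⁻¹ : ℝ) ^ (n + 1)) ^ 2)⁻¹) *
            (ENNReal.ofReal ((R * (2⁻¹ : ℝ) ^ n) ^ 3) * ν) := by
          gcongr
          calc volume (A n) ≤ volume (ball p (R * (2⁻¹ : ℝ) ^ n)) :=
                measure_mono diff_subset
            _ = ENNReal.ofReal ((R * (2⁻¹ : ℝ) ^ n) ^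
                  Module.finrank ℝ (EuclideanSpace ℝ (Fin 2) × ℝ)) * ν :=
                Measure.addHaar_ball volume p (by positivity)
            _ = ENNReal.ofReal ((R * (2⁻¹ : ℝ) ^ n) ^ 3) * ν := by rw [stmt10_finrank]
      _ = ENNReal.ofReal (4 * R * (2⁻¹ : ℝ) ^ n) * ν := by
          rw [← mul_assoc, ← ENNReal.ofReal_mul (by positivity)]
          congr 2
          have h2 : ((2:ℝ)⁻¹) ^ (n + 1) = (2⁻¹ : ℝ) ^ n * 2⁻¹ := pow_succ _ _
          have hu : (0:ℝ) < (2⁻¹ : ℝ) ^ n := by positivity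
          rw [h2]
          field_simp
          ring
  calc ∫⁻ y in S, g y ≤ ∫⁻ y in {p} ∪ ⋃ n, A n, g y := lintegral_mono_set hcover
    _ ≤ (∫⁻ y in {p}, g y) + ∫⁻ y in ⋃ n, A n, g y := lintegral_union_le _ _ _
    _ ≤ 0 + ∑' n, ∫⁻ y in A n, g y := by
        gcongr
        · rw [setLIntegral_measure_zero _ _ (stmt10_volume_singleton p)]
        · exact lintegral_iUnion_le _ _
    _ ≤ 0 + ∑' n, ENNReal.ofReal (4 * R * (2⁻¹ : ℝ) ^ n) * ν := by
        gcongr with n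
        exact hterm n
    _ < ⊤ := by
        rw [zero_add]
        have : ∀ n : ℕ, ENNReal.ofReal (4 * R * (2⁻¹ : ℝ) ^ n) * ν =
            (ENNReal.ofReal (4 * R) * ν) * (ENNReal.ofReal 2⁻¹) ^ n := by
          intro n
          rw [ENNReal.ofReal_mul (by positivity), ENNReal.ofReal_pow (by norm_num)]
          ring
        simp_rw [this]
        rw [ENNReal.tsum_mul_left, ENNReal.tsum_geometric]
        apply ENNReal.mul_lt_top
        · exact ENNReal.mul_lt_top ENNReal.ofReal_lt_top hν_fin
        · rw [ENNReal.inv_lt_top, tsub_pos_iff_lt]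
          exact ENNReal.ofReal_lt_one.2 (by norm_num)

/-- The `x₃`-average over `(0,1)` of the vertical component of the rescaled
self-gravitation kernel vanishes: for a.e. `x₃ ∈ (0,1)` the integral
`F(x₃) = ∫_{ω×(0,1)} ε r(y_h)(x₃ − y₃)/(|x_h − y_h|² + ε²(x₃ − y₃)²)^{3/2} dy`
converges absolutely, and `∫₀¹ F(x₃) dx₃ = 0`. -/
theorem stmt_10 (ω : Set (EuclideanSpace ℝ (Fin 2)))
    (hωb : Bornology.IsBounded ω) (hωm : MeasurableSet ω)
    (r : EuclideanSpace ℝ (Fin 2) → ℝ) (hrm : Measurable r)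
    (M : ℝ) (hrb : ∀ y, |r y| ≤ M)
    (ε : ℝ) (hε : 0 < ε) (x_h : EuclideanSpace ℝ (Fin 2)) :
    (∀ᵐ x₃ ∂(volume.restrict (Ioo (0:ℝ) 1)),
      IntegrableOn
        (fun y : EuclideanSpace ℝ (Fin 2) × ℝ =>
          ε * r y.1 * (x₃ - y.2) / (‖x_h - y.1‖ ^ 2 + ε ^ 2 * (x₃ - y.2) ^ 2) ^ (3 / 2 : ℝ))
        (ω ×ˢ Ioo (0:ℝ) 1)) ∧
    ∫ x₃ in Ioo (0:ℝ) 1, ∫ y in ω ×ˢ Ioo (0:ℝ) 1,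
        ε * r y.1 * (x₃ - y.2) / (‖x_h - y.1‖ ^ 2 + ε ^ 2 * (x₃ - y.2) ^ 2) ^ (3 / 2 : ℝ)
      = 0 := by
  have hM : 0 ≤ M := (abs_nonneg _).trans (hrb 0)
  -- Part 1 : integrability, for every `x₃`.
  have key : ∀ x₃ : ℝ,
      IntegrableOn
        (fun y : EuclideanSpace ℝ (Fin 2) × ℝ =>
          ε * r y.1 * (x₃ - y.2) / (‖x_h - y.1‖ ^ 2 + ε ^ 2 * (x₃ - y.2) ^ 2) ^ (3 / 2 : ℝ))
        (ω ×ˢ Ioo (0:ℝ) 1) := by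
    intro x₃
    set p : EuclideanSpace ℝ (Fin 2) × ℝ := (x_h, x₃) with hp
    set c : ℝ := min 1 (ε ^ 2) with hcdef
    have hc : 0 < c := lt_min one_pos (by positivity)
    set C : ℝ := ε * M / c ^ ((3:ℝ)/2) with hCdef
    have hC : 0 ≤ C := by positivity
    have hbound : ∀ y : EuclideanSpace ℝ (Fin 2) × ℝ,
        ‖ε * r y.1 * (x₃ - y.2) / (‖x_h - y.1‖ ^ 2 + ε ^ 2 * (x₃ - y.2) ^ 2) ^ (3 / 2 : ℝ)‖
          ≤ C * (‖y - p‖ ^ 2)⁻¹ := by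
      intro y
      rcases eq_or_ne y p with rfl | hyp
      · simp [hp]
      · have ht : 0 < ‖y - p‖ := by
          rw [norm_pos_iff, sub_ne_zero]; exact hyp
        have hmax : ‖y - p‖ = max ‖y.1 - x_h‖ |y.2 - x₃| := by
          rw [Prod.norm_def]
          simp [hp, Real.norm_eq_abs]
        have hb : |x₃ - y.2| ≤ ‖y - p‖ := by
          rw [abs_sub_comm, hmax]; exact le_max_right _ _
        have hc1 : c ≤ 1 := min_le_left _ _
        have hc2 : c ≤ ε ^ 2 := min_le_right _ _
        have hD : c * ‖y - p‖ ^ 2 ≤ ‖x_h - y.1‖ ^ 2 + ε ^ 2 * (x₃ - y.2) ^ 2 := by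
          have e1 : ‖x_h - y.1‖ = ‖y.1 - x_h‖ := norm_sub_rev _ _
          rw [e1, hmax]
          rcases max_cases (‖y.1 - x_h‖) (|y.2 - x₃|) with ⟨hmx, _⟩ | ⟨hmx, _⟩ <;> rw [hmx]
          · nlinarith [sq_nonneg ε, sq_nonneg (x₃ - y.2),
              mul_nonneg (sq_nonneg ε) (sq_nonneg (x₃ - y.2)), norm_nonneg (y.1 - x_h),
              sq_nonneg ‖y.1 - x_h‖]
          · have e2 : |y.2 - x₃| ^ 2 = (x₃ - y.2) ^ 2 := by
              rw [sq_abs]; ring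
            rw [e2]
            nlinarith [sq_nonneg (x₃ - y.2), sq_nonneg ‖y.1 - x_h‖,
              mul_le_mul_of_nonneg_right hc2 (sq_nonneg (x₃ - y.2))]
        have hDpos : (0:ℝ) < ‖x_h - y.1‖ ^ 2 + ε ^ 2 * (x₃ - y.2) ^ 2 :=
          lt_of_lt_of_le (by positivity) hD
        have hpow : (‖y - p‖ ^ 2 : ℝ) ^ ((3:ℝ)/2) = ‖y - p‖ ^ (3:ℕ) := by
          rw [← Real.rpow_natCast ‖y - p‖ 2, ← Real.rpow_mul (norm_nonneg _),
            ← Real.rpow_natCast ‖y - p‖ 3]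
          norm_num
        have hD' : c ^ ((3:ℝ)/2) * ‖y - p‖ ^ (3:ℕ) ≤
            (‖x_h - y.1‖ ^ 2 + ε ^ 2 * (x₃ - y.2) ^ 2) ^ ((3:ℝ)/2) := by
          calc c ^ ((3:ℝ)/2) * ‖y - p‖ ^ (3:ℕ)
              = (c * ‖y - p‖ ^ 2) ^ ((3:ℝ)/2) := by
                rw [Real.mul_rpow hc.le (by positivity), hpow]
            _ ≤ _ := Real.rpow_le_rpow (by positivity) hD (by norm_num)
        have hnorm : ‖ε * r y.1 * (x₃ - y.2) /
            (‖x_h - y.1‖ ^ 2 + ε ^ 2 * (x₃ - y.2) ^ 2) ^ (3 / 2 : ℝ)‖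
            = ε * |r y.1| * |x₃ - y.2| /
              (‖x_h - y.1‖ ^ 2 + ε ^ 2 * (x₃ - y.2) ^ 2) ^ (3 / 2 : ℝ) := by
          rw [Real.norm_eq_abs, abs_div, abs_of_nonneg (Real.rpow_nonneg hDpos.le _),
            abs_mul, abs_mul, abs_of_pos hε]
        rw [hnorm]
        calc ε * |r y.1| * |x₃ - y.2| /
            (‖x_h - y.1‖ ^ 2 + ε ^ 2 * (x₃ - y.2) ^ 2) ^ (3 / 2 : ℝ)
            ≤ ε * M * ‖y - p‖ / (c ^ ((3:ℝ)/2) * ‖y - p‖ ^ (3:ℕ)) := by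
              apply div_le_div₀ (by positivity) ?_ (by positivity) hD'
              exact mul_le_mul (mul_le_mul_of_nonneg_left (hrb _) hε.le) hb
                (abs_nonneg _) (by positivity)
          _ = C * (‖y - p‖ ^ 2)⁻¹ := by
              rw [hCdef]
              have hcp : (0:ℝ) < c ^ ((3:ℝ)/2) := by positivity
              field_simp
    have hS : IntegrableOn
        (fun y : EuclideanSpace ℝ (Fin 2) × ℝ => C * (‖y - p‖ ^ 2)⁻¹)
        (ω ×ˢ Ioo (0:ℝ) 1) :=
      (stmt10_integrableOn_inv_norm_sq (hωm.prod measurableSet_Ioo)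
        (hωb.prod (Metric.isBounded_Ioo 0 1))).const_mul C
    refine hS.mono' ?_ (ae_of_all _ hbound)
    apply Measurable.aestronglyMeasurable
    apply Measurable.div
    · exact (measurable_const.mul (hrm.comp measurable_fst)).mul
        (measurable_const.sub measurable_snd)
    · exact (Real.continuous_rpow_const (by norm_num : (0:ℝ) ≤ 3/2)).measurable.comp
        (((measurable_const.sub measurable_fst).norm.pow_const 2).add
          (measurable_const.mul ((measurable_const.sub measurable_snd).pow_const 2)))
  refine ⟨ae_of_all _ key, ?_⟩
  -- Part 2 : vanishing of the average, by the reflection symmetry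
  -- `x₃ ↦ 1 - x₃`, `y₃ ↦ 1 - y₃`.
  set F : ℝ → ℝ := fun x₃ => ∫ y in ω ×ˢ Ioo (0:ℝ) 1,
      ε * r y.1 * (x₃ - y.2) / (‖x_h - y.1‖ ^ 2 + ε ^ 2 * (x₃ - y.2) ^ 2) ^ (3 / 2 : ℝ)
    with hF
  have hσ : MeasurePreserving (fun x : ℝ => 1 - x) volume volume :=
    Measure.measurePreserving_sub_left volume 1
  have hσe : MeasurableEmbedding (fun x : ℝ => 1 - x) :=
    (Homeomorph.subLeft (1:ℝ)).measurableEmbedding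
  have himg : (fun x : ℝ => 1 - x) '' Ioo 0 1 = Ioo 0 1 := by
    rw [Set.image_const_sub_Ioo]; norm_num
  have h2 : ∀ x₃ : ℝ, F (1 - x₃) = - F x₃ := by
    intro x₃
    have hτ : MeasurePreserving
        (Prod.map (id : EuclideanSpace ℝ (Fin 2) → EuclideanSpace ℝ (Fin 2))
          (fun t : ℝ => 1 - t))
        ((volume : Measure (EuclideanSpace ℝ (Fin 2))).prod (volume : Measure ℝ))
        ((volume : Measure (EuclideanSpace ℝ (Fin 2))).prod (volume : Measure ℝ)) :=
      (MeasurePreserving.id _).prod hσ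
    have hτe : MeasurableEmbedding
        (Prod.map (id : EuclideanSpace ℝ (Fin 2) → EuclideanSpace ℝ (Fin 2))
          (fun t : ℝ => 1 - t)) :=
      MeasurableEmbedding.id.prodMap hσe
    have himg2 : Prod.map (id : EuclideanSpace ℝ (Fin 2) → EuclideanSpace ℝ (Fin 2))
        (fun t : ℝ => 1 - t) '' (ω ×ˢ Ioo 0 1) = ω ×ˢ Ioo 0 1 := by
      have h := Set.prod_image_image_eq (s := ω) (t := Ioo (0:ℝ) 1)
        (m₁ := fun a : EuclideanSpace ℝ (Fin 2) => a) (m₂ := fun t : ℝ => 1 - t)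
      simp only [image_id'] at h
      calc Prod.map (id : EuclideanSpace ℝ (Fin 2) → EuclideanSpace ℝ (Fin 2))
            (fun t : ℝ => 1 - t) '' (ω ×ˢ Ioo 0 1)
          = ω ×ˢ ((fun t : ℝ => 1 - t) '' Ioo 0 1) := h.symm
        _ = ω ×ˢ Ioo 0 1 := by rw [himg]
    calc F (1 - x₃)
        = ∫ y in Prod.map (id : EuclideanSpace ℝ (Fin 2) → EuclideanSpace ℝ (Fin 2))
              (fun t : ℝ => 1 - t) '' (ω ×ˢ Ioo 0 1),
            ε * r y.1 * ((1 - x₃) - y.2) /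
              (‖x_h - y.1‖ ^ 2 + ε ^ 2 * ((1 - x₃) - y.2) ^ 2) ^ (3 / 2 : ℝ) := by
          rw [hF, himg2]
      _ = ∫ y in ω ×ˢ Ioo (0:ℝ) 1,
            ε * r y.1 * ((1 - x₃) - (1 - y.2)) /
              (‖x_h - y.1‖ ^ 2 + ε ^ 2 * ((1 - x₃) - (1 - y.2)) ^ 2) ^ (3 / 2 : ℝ) := by
          rw [Measure.volume_eq_prod]
          exact hτ.setIntegral_image_emb hτe _ _
      _ = ∫ y in ω ×ˢ Ioo (0:ℝ) 1,
            - (ε * r y.1 * (x₃ - y.2) /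
              (‖x_h - y.1‖ ^ 2 + ε ^ 2 * (x₃ - y.2) ^ 2) ^ (3 / 2 : ℝ)) := by
          refine integral_congr_ae (Filter.Eventually.of_forall fun y => ?_)
          have e1 : (1 - x₃) - (1 - y.2) = -(x₃ - y.2) := by ring
          simp only [e1, neg_sq, mul_neg, neg_div]
      _ = - F x₃ := by rw [integral_neg]
  have h1 : ∫ x₃ in Ioo (0:ℝ) 1, F x₃ = ∫ x₃ in Ioo (0:ℝ) 1, F (1 - x₃) := by
    conv_lhs => rw [← himg]
    exact hσ.setIntegral_image_emb hσe F _
  have h3 : ∫ x₃ in Ioo (0:ℝ) 1, F x₃ = - ∫ x₃ in Ioo (0:ℝ) 1, F x₃ := by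
    conv_lhs => rw [h1]
    simp_rw [h2]
    exact integral_neg _
  linarith [h3]
end

section
/- Let p : [0,∞) → ℝ be continuous on [0,∞), continuously differentiable on (0,∞), with p(0) = 0, p'(ρ) > 0 for all ρ > 0, lim_{ρ→∞} p'(ρ)/ρ^{γ−1} = a₀ for some constants a₀ > 0 and γ > 3/2, and with s ↦ p(s)/s² integrable on (0,1), and let H(ρ) = ρ ∫₀^ρ p(s)/s² ds. Then there exist constants c₁ > 0 and c₂ > 0 such that H(ρ) ≥ c₁ ρ^γ − c₂ for all ρ ≥ 0. -/
open MeasureTheory Filter Set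

/-- Coercivity of the pressure potential: `H(ρ) ≥ c₁ ρ^γ − c₂` for all `ρ ≥ 0`. -/
theorem stmt_15 (γ a₀ : ℝ) (p p' : ℝ → ℝ)
    (hγ : 3 / 2 < γ) (ha₀ : 0 < a₀)
    (hp_cont : ContinuousOn p (Ici 0))
    (hp0 : p 0 = 0)
    (hp_deriv : ∀ x : ℝ, 0 < x → HasDerivAt p (p' x) x)
    (hp'_cont : ContinuousOn p' (Ioi 0))
    (hp'_pos : ∀ x : ℝ, 0 < x → 0 < p' x)
    (hp_lim : Tendsto (fun ρ : ℝ => p' ρ / ρ ^ (γ - 1)) atTop (nhds a₀))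
    (hp_int : IntegrableOn (fun s : ℝ => p s / s ^ 2) (Ioo 0 1)) :
    ∃ c₁ c₂ : ℝ, 0 < c₁ ∧ 0 < c₂ ∧
      ∀ ρ : ℝ, 0 ≤ ρ → c₁ * ρ ^ γ - c₂ ≤ Hpot p ρ := by
  have hγ1 : (1:ℝ) < γ := by linarith
  have hγ0 : (0:ℝ) < γ := by linarith
  -- p is nonnegative on [0, ∞)
  have hmono : StrictMonoOn p (Ici 0) := by
    refine strictMonoOn_of_deriv_pos (convex_Ici 0) hp_cont ?_
    intro x hx
    rw [interior_Ici] at hx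
    rw [(hp_deriv x hx).deriv]
    exact hp'_pos x hx
  have hp_nonneg : ∀ s : ℝ, 0 ≤ s → 0 ≤ p s := by
    intro s hs
    rcases hs.eq_or_lt with h | h
    · rw [← h, hp0]
    · have := hmono (mem_Ici.mpr le_rfl) (mem_Ici.mpr hs) h
      rw [hp0] at this
      exact this.le
  -- from the limit, get a threshold M
  obtain ⟨M₀, hM₀⟩ := eventually_atTop.mp
    (hp_lim.eventually (eventually_gt_nhds (half_lt_self ha₀)))
  set M : ℝ := max M₀ 1 with hMdef
  have hM1 : (1:ℝ) ≤ M := le_max_right _ _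
  have hMpos : (0:ℝ) < M := lt_of_lt_of_le one_pos hM1
  have hp'_lb : ∀ s : ℝ, M ≤ s → a₀ / 2 * s ^ (γ - 1) ≤ p' s := by
    intro s hs
    have hspos : 0 < s := lt_of_lt_of_le hMpos hs
    have h1 := hM₀ s (le_trans (le_max_left _ _) hs)
    have hpow : 0 < s ^ (γ - 1) := Real.rpow_pos_of_pos hspos _
    rw [lt_div_iff₀ hpow] at h1
    exact h1.le
  -- lower bound for p on [2M, ∞)
  have hp_lb : ∀ s : ℝ, 2 * M ≤ s → a₀ / (4 * γ) * s ^ γ ≤ p s := by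
    intro s hs
    have hMs : M ≤ s := le_trans (by linarith) hs
    have hspos : 0 < s := lt_of_lt_of_le hMpos hMs
    have hsub : Icc M s ⊆ Ioi 0 := fun x hx => lt_of_lt_of_le hMpos hx.1
    have hsub' : uIcc M s ⊆ Ioi 0 := by rw [uIcc_of_le hMs]; exact hsub
    have hint1 : IntervalIntegrable p' volume M s :=
      (hp'_cont.mono hsub').intervalIntegrable
    have hFTC : ∫ t in M..s, p' t = p s - p M :=
      intervalIntegral.integral_eq_sub_of_hasDerivAt
        (fun x hx => hp_deriv x (hsub' hx)) hint1
    have hint2 : IntervalIntegrable (fun t : ℝ => a₀ / 2 * t ^ (γ - 1)) volume M s := by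
      apply ContinuousOn.intervalIntegrable
      exact continuousOn_const.mul
        (continuousOn_id.rpow_const (fun x _ => Or.inr (by linarith)))
    have hmono_int : ∫ t in M..s, a₀ / 2 * t ^ (γ - 1) ≤ ∫ t in M..s, p' t :=
      intervalIntegral.integral_mono_on hMs hint2 hint1 (fun x hx => hp'_lb x hx.1)
    have hval : ∫ t in M..s, a₀ / 2 * t ^ (γ - 1)
        = a₀ / 2 * ((s ^ γ - M ^ γ) / γ) := by
      rw [intervalIntegral.integral_const_mul, integral_rpow (Or.inl (by linarith))]
      have h : γ - 1 + 1 = γ := by ring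
      rw [h]
    -- M^γ ≤ s^γ / 2
    have hMγ : M ^ γ ≤ s ^ γ / 2 := by
      have h1 : M ^ γ ≤ (s / 2) ^ γ :=
        Real.rpow_le_rpow hMpos.le (by linarith) hγ0.le
      have h2 : (s / 2) ^ γ = s ^ γ / 2 ^ γ :=
        Real.div_rpow hspos.le (by norm_num : (0:ℝ) ≤ 2) γ
      have h3 : (2:ℝ) ≤ 2 ^ γ := by
        calc (2:ℝ) = 2 ^ (1:ℝ) := (Real.rpow_one 2).symm
        _ ≤ 2 ^ γ := Real.rpow_le_rpow_of_exponent_le one_le_two hγ1.le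
      have h4 : s ^ γ / 2 ^ γ ≤ s ^ γ / 2 :=
        div_le_div_of_nonneg_left (Real.rpow_pos_of_pos hspos γ).le two_pos h3
      linarith
    have hpM : 0 ≤ p M := hp_nonneg M hMpos.le
    rw [hval, hFTC] at hmono_int
    have hkey : a₀ / 2 * ((s ^ γ - M ^ γ) / γ) ≤ p s := by linarith
    calc a₀ / (4 * γ) * s ^ γ ≤ a₀ / 2 * ((s ^ γ - M ^ γ) / γ) := by
          have e1 : a₀ / (4 * γ) * s ^ γ = a₀ * s ^ γ / (4 * γ) := by ring
          have e2 : a₀ / 2 * ((s ^ γ - M ^ γ) / γ)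
              = a₀ * (s ^ γ - M ^ γ) / (2 * γ) := by ring
          rw [e1, e2, div_le_div_iff₀ (by positivity) (by positivity)]
          have hprod : 0 ≤ a₀ * γ * (s ^ γ - 2 * M ^ γ) :=
            mul_nonneg (mul_nonneg ha₀.le hγ0.le) (by linarith)
          nlinarith [hprod]
      _ ≤ p s := hkey
  -- integrability of p s / s² on intervals
  have hIntAbove : ∀ a b : ℝ, 0 < a → a ≤ b →
      IntervalIntegrable (fun s : ℝ => p s / s ^ 2) volume a b := by
    intro a b ha hab
    apply ContinuousOn.intervalIntegrable
    rw [uIcc_of_le hab]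
    apply ContinuousOn.div
    · exact hp_cont.mono (fun x hx => le_trans ha.le hx.1)
    · exact continuousOn_id.pow 2
    · intro x hx
      exact pow_ne_zero 2 (ne_of_gt (lt_of_lt_of_le ha hx.1))
  have hInt01 : IntervalIntegrable (fun s : ℝ => p s / s ^ 2) volume 0 1 := by
    rw [intervalIntegrable_iff_integrableOn_Ioo_of_le zero_le_one]
    exact hp_int
  have hInt0 : ∀ b : ℝ, 1 ≤ b →
      IntervalIntegrable (fun s : ℝ => p s / s ^ 2) volume 0 b := by
    intro b hb
    exact hInt01.trans (hIntAbove 1 b one_pos hb)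
  -- nonnegativity of the integral
  have hInt_nonneg : ∀ b : ℝ, 0 ≤ b → 0 ≤ ∫ s in (0:ℝ)..b, p s / s ^ 2 := by
    intro b hb
    apply intervalIntegral.integral_nonneg hb
    intro u hu
    exact div_nonneg (hp_nonneg u hu.1) (sq_nonneg u)
  -- constants
  have h8M : (0:ℝ) < 8 * M := by linarith
  refine ⟨a₀ / (8 * γ * (γ - 1)), a₀ / (8 * γ * (γ - 1)) * (8 * M) ^ γ, ?_, ?_, ?_⟩
  · have : (0:ℝ) < γ - 1 := by linarith
    positivity
  · have h1 : (0:ℝ) < γ - 1 := by linarith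
    positivity
  intro ρ hρ
  set c₁ : ℝ := a₀ / (8 * γ * (γ - 1)) with hc₁def
  have hc₁ : 0 < c₁ := by
    rw [hc₁def]
    have : (0:ℝ) < γ - 1 := by linarith
    positivity
  have hc₂ : 0 < c₁ * (8 * M) ^ γ := mul_pos hc₁ (Real.rpow_pos_of_pos h8M γ)
  by_cases hcase : ρ ≤ 8 * M
  · have h1 : c₁ * ρ ^ γ ≤ c₁ * (8 * M) ^ γ :=
      mul_le_mul_of_nonneg_left (Real.rpow_le_rpow hρ hcase hγ0.le) hc₁.le
    have h2 : 0 ≤ Hpot p ρ := mul_nonneg hρ (hInt_nonneg ρ hρ)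
    linarith
  · push_neg at hcase
    have hρpos : 0 < ρ := lt_trans h8M hcase
    set L : ℝ := 2 * M with hLdef
    have hLpos : 0 < L := by rw [hLdef]; linarith
    have hL1 : (1:ℝ) ≤ L := by rw [hLdef]; linarith
    have hLρ : L ≤ ρ := by rw [hLdef]; linarith
    have hIa : IntervalIntegrable (fun s : ℝ => p s / s ^ 2) volume 0 L := hInt0 L hL1
    have hIb : IntervalIntegrable (fun s : ℝ => p s / s ^ 2) volume L ρ :=
      hIntAbove L ρ hLpos hLρ
    have hsplit : (∫ s in (0:ℝ)..L, p s / s ^ 2) + (∫ s in L..ρ, p s / s ^ 2)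
        = ∫ s in (0:ℝ)..ρ, p s / s ^ 2 :=
      intervalIntegral.integral_add_adjacent_intervals hIa hIb
    have h0L : 0 ≤ ∫ s in (0:ℝ)..L, p s / s ^ 2 := hInt_nonneg L hLpos.le
    -- pointwise lower bound on [L, ρ]
    have hptwise : ∀ x ∈ Icc L ρ, a₀ / (4 * γ) * x ^ (γ - 2) ≤ p x / x ^ 2 := by
      intro x hx
      have hxL : L ≤ x := hx.1
      have hxpos : 0 < x := lt_of_lt_of_le hLpos hxL
      have h1 : a₀ / (4 * γ) * x ^ γ ≤ p x := hp_lb x (hLdef ▸ hxL)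
      have h2 : x ^ (γ - 2) = x ^ γ / x ^ 2 := by
        rw [Real.rpow_sub hxpos, Real.rpow_two]
      rw [h2, ← mul_div_assoc]
      exact (div_le_div_iff_of_pos_right (by positivity)).mpr h1
    have hIc : IntervalIntegrable (fun x : ℝ => a₀ / (4 * γ) * x ^ (γ - 2)) volume L ρ := by
      apply ContinuousOn.intervalIntegrable
      rw [uIcc_of_le hLρ]
      exact continuousOn_const.mul (continuousOn_id.rpow_const
        (fun x hx => Or.inl (ne_of_gt (lt_of_lt_of_le hLpos hx.1))))
    have hmono2 : ∫ x in L..ρ, a₀ / (4 * γ) * x ^ (γ - 2) ≤ ∫ x in L..ρ, p x / x ^ 2 :=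
      intervalIntegral.integral_mono_on hLρ hIc hIb hptwise
    have hval2 : ∫ x in L..ρ, a₀ / (4 * γ) * x ^ (γ - 2)
        = a₀ / (4 * γ) * ((ρ ^ (γ - 1) - L ^ (γ - 1)) / (γ - 1)) := by
      rw [intervalIntegral.integral_const_mul, integral_rpow (Or.inl (by linarith))]
      have h : γ - 2 + 1 = γ - 1 := by ring
      rw [h]
    -- L^(γ-1) ≤ ρ^(γ-1)/2
    have hLle : L ^ (γ - 1) ≤ ρ ^ (γ - 1) / 2 := by
      have hL4 : L ≤ ρ / 4 := by rw [hLdef]; linarith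
      have h1 : L ^ (γ - 1) ≤ (ρ / 4) ^ (γ - 1) :=
        Real.rpow_le_rpow hLpos.le hL4 (by linarith)
      have h2 : (ρ / 4) ^ (γ - 1) = ρ ^ (γ - 1) / 4 ^ (γ - 1) :=
        Real.div_rpow hρpos.le (by norm_num : (0:ℝ) ≤ 4) (γ - 1)
      have h3 : (2:ℝ) ≤ 4 ^ (γ - 1) := by
        have h4 : (4:ℝ) = 2 ^ (2:ℝ) := by rw [Real.rpow_two]; norm_num
        rw [h4, ← Real.rpow_mul (by norm_num : (0:ℝ) ≤ 2)]
        calc (2:ℝ) = 2 ^ (1:ℝ) := (Real.rpow_one 2).symm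
          _ ≤ 2 ^ (2 * (γ - 1)) :=
            Real.rpow_le_rpow_of_exponent_le one_le_two (by linarith)
      have h5 : ρ ^ (γ - 1) / 4 ^ (γ - 1) ≤ ρ ^ (γ - 1) / 2 :=
        div_le_div_of_nonneg_left (Real.rpow_pos_of_pos hρpos _).le two_pos h3
      linarith
    have hγ1' : (0:ℝ) < γ - 1 := by linarith
    have hInt_lb : a₀ / (8 * γ) * ρ ^ (γ - 1) / (γ - 1)
        ≤ ∫ s in (0:ℝ)..ρ, p s / s ^ 2 := by
      have h1 : a₀ / (4 * γ) * ((ρ ^ (γ - 1) - L ^ (γ - 1)) / (γ - 1))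
          ≤ ∫ s in L..ρ, p s / s ^ 2 := hval2 ▸ hmono2
      have h2 : a₀ / (8 * γ) * ρ ^ (γ - 1) / (γ - 1)
          ≤ a₀ / (4 * γ) * ((ρ ^ (γ - 1) - L ^ (γ - 1)) / (γ - 1)) := by
        have e1 : a₀ / (8 * γ) * ρ ^ (γ - 1) / (γ - 1)
            = a₀ * ρ ^ (γ - 1) / (8 * γ * (γ - 1)) := by
          field_simp
        have e2 : a₀ / (4 * γ) * ((ρ ^ (γ - 1) - L ^ (γ - 1)) / (γ - 1))
            = a₀ * (ρ ^ (γ - 1) - L ^ (γ - 1)) / (4 * γ * (γ - 1)) := by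
          field_simp
        have hpos1 : (0:ℝ) < 8 * γ * (γ - 1) := by nlinarith [mul_pos hγ0 hγ1']
        have hpos2 : (0:ℝ) < 4 * γ * (γ - 1) := by nlinarith [mul_pos hγ0 hγ1']
        rw [e1, e2, div_le_div_iff₀ hpos1 hpos2]
        have hprod : 0 ≤ a₀ * (γ * (γ - 1)) * (ρ ^ (γ - 1) - 2 * L ^ (γ - 1)) :=
          mul_nonneg (mul_nonneg ha₀.le (mul_pos hγ0 hγ1').le) (by linarith)
        linarith [hprod]
      linarith
    have hργ : ρ ^ γ = ρ * ρ ^ (γ - 1) := by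
      have h := Real.rpow_add hρpos 1 (γ - 1)
      rw [Real.rpow_one] at h
      have h' : (1:ℝ) + (γ - 1) = γ := by ring
      rw [h'] at h
      exact h
    have hHρ : c₁ * ρ ^ γ ≤ Hpot p ρ := by
      unfold Hpot
      calc c₁ * ρ ^ γ = ρ * (a₀ / (8 * γ) * ρ ^ (γ - 1) / (γ - 1)) := by
            rw [hργ, hc₁def]
            field_simp
        _ ≤ ρ * ∫ s in (0:ℝ)..ρ, p s / s ^ 2 :=
            mul_le_mul_of_nonneg_left hInt_lb hρpos.le
    linarith
end
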